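/- arXiv:1910.11311 — 8 statements merged into one kernel-verified Lean document; each statement's English description precedes it below -/
import Mathlib

section
/- Fix parameters c_z, c_{-z}, β_z, β_{z1}, β_{z2}, γ_z > 0, let e_{z1} = β_{z1}β_{z2} + (β_{z1}+β_{z2})c_{-z} + c_{-z}², e_{z2} = c_z(β_{z2} + c_{-z}), e_{z3} = β_z β_{z2} + β_{z1} β_{z2} + β_{z1} c_{-z}, and let μ ≥ 0 and D ≥ 0. Then Q_z(μ) is invertible, and the unique solution m* ∈ ℝ³ of the equilibrium equation Q_z(μ) m* + (γ_z D, 0, 0) = 0 is m* = γ_z D · (β_{z2} c_z μ + e_{z1}, e_{z2} μ, c_z² μ²) / (β_{z2} c_z² μ² + e_{z3} c_z μ + e_{z1} β_z). -/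
open Matrix

/-- The 3×3 matrix `Q_z(μ)` of the fast ZEB1 mRNA/miRNA-complex dynamics
at fixed miRNA-200 concentration `μ`. -/
noncomputable def Qz (cz cmz βz βz1 βz2 μ : ℝ) : Matrix (Fin 3) (Fin 3) ℝ :=
  !![-cz * μ - βz, cmz, 0;
     cz * μ, -βz1 - cz * μ - cmz, cmz;
     0, cz * μ, -cmz - βz2]

/-- `Q_z(μ)` is invertible, and the unique solution `m*` of
`Q_z(μ) m* + (γz D, 0, 0) = 0` is
`m* = γz D (βz2 cz μ + ez1, ez2 μ, cz² μ²)/(βz2 cz² μ² + ez3 cz μ + ez1 βz)`. -/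
theorem Qz_qss (cz cmz βz βz1 βz2 γz : ℝ)
    (hcz : 0 < cz) (hcmz : 0 < cmz) (hβz : 0 < βz) (hβz1 : 0 < βz1) (hβz2 : 0 < βz2)
    (hγz : 0 < γz) (μ D : ℝ) (hμ : 0 ≤ μ) (hD : 0 ≤ D) :
    let ez1 : ℝ := βz1 * βz2 + (βz1 + βz2) * cmz + cmz ^ 2
    let ez2 : ℝ := cz * (βz2 + cmz)
    let ez3 : ℝ := βz * βz2 + βz1 * βz2 + βz1 * cmz
    let mstar : Fin 3 → ℝ :=
      (γz * D / (βz2 * cz ^ 2 * μ ^ 2 + ez3 * cz * μ + ez1 * βz)) •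
        ![βz2 * cz * μ + ez1, ez2 * μ, cz ^ 2 * μ ^ 2]
    (Qz cz cmz βz βz1 βz2 μ).det ≠ 0
    ∧ (Qz cz cmz βz βz1 βz2 μ).mulVec mstar + ![γz * D, 0, 0] = 0
    ∧ ∀ m : Fin 3 → ℝ,
        (Qz cz cmz βz βz1 βz2 μ).mulVec m + ![γz * D, 0, 0] = 0 → m = mstar := by
  intro ez1 ez2 ez3 mstar
  have hden : 0 < βz2 * cz ^ 2 * μ ^ 2 + ez3 * cz * μ + ez1 * βz := by
    have h1 : 0 ≤ βz2 * cz ^ 2 * μ ^ 2 := by positivity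
    have h2 : 0 ≤ ez3 * cz * μ := by simp only [ez3]; positivity
    have h3 : 0 < ez1 * βz := by simp only [ez1]; positivity
    linarith
  have hdet : (Qz cz cmz βz βz1 βz2 μ).det =
      -(βz2 * cz ^ 2 * μ ^ 2 + ez3 * cz * μ + ez1 * βz) := by
    simp only [Qz, Matrix.det_fin_three, ez1, ez2, ez3]
    simp [Matrix.cons_val_zero, Matrix.cons_val_one]
    ring
  have hdet0 : (Qz cz cmz βz βz1 βz2 μ).det ≠ 0 := by
    rw [hdet]; exact neg_ne_zero.mpr (ne_of_gt hden)
  have heq : (Qz cz cmz βz βz1 βz2 μ).mulVec mstar + ![γz * D, 0, 0] = 0 := by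
    funext i
    fin_cases i <;>
      · simp only [Qz, mstar, ez1, ez2, ez3, Matrix.mulVec, dotProduct,
          Fin.sum_univ_three, Pi.add_apply, Pi.smul_apply, smul_eq_mul]
        simp [Matrix.cons_val_zero, Matrix.cons_val_one]
        field_simp
        ring
  refine ⟨hdet0, heq, ?_⟩
  intro m hm
  have hinj : Function.Injective (Qz cz cmz βz βz1 βz2 μ).mulVec := by
    have : IsUnit (Qz cz cmz βz βz1 βz2 μ).det := isUnit_iff_ne_zero.mpr hdet0
    exact Matrix.mulVec_injective_iff_isUnit.mpr ((Matrix.isUnit_iff_isUnit_det _).mpr this)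
  apply hinj
  have := hm.trans heq.symm
  exact add_right_cancel this
end

section
/- Assume all parameters of the reduced EMT/MET system are positive. Then the boundary of the nonnegative orthant is repelling: for every x in the closed nonnegative orthant [0,∞)⁴ and every index i ∈ {1,2,3,4}, if the i-th coordinate of x is zero then G_i(x) > 0. In particular, G has no equilibria on the boundary of [0,∞)⁴. -/
/-- Parameters of the reduced EMT/MET system. `βm34` denotes `β₋34`, `cms` denotes
`c₋s`, `kms` denotes `k₋s`, etc. -/
structure EMTParams where
  β34 : ℝ
  βm34 : ℝ
  β200 : ℝ
  βm200 : ℝ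
  E34 : ℝ
  E200 : ℝ
  ES : ℝ
  EZ : ℝ
  As : ℝ
  Az : ℝ
  γs : ℝ
  γz : ℝ
  cs : ℝ
  cms : ℝ
  cz : ℝ
  cmz : ℝ
  βs : ℝ
  βs1 : ℝ
  βs2 : ℝ
  βz : ℝ
  βz1 : ℝ
  βz2 : ℝ
  ks : ℝ
  ks1 : ℝ
  ks2 : ℝ
  kms : ℝ
  kz : ℝ
  kz1 : ℝ
  kz2 : ℝ
  kmz : ℝ
  δz : ℝ

namespace EMTParams

/-- All parameters are positive. -/
def Pos (p : EMTParams) : Prop :=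
  0 < p.β34 ∧ 0 < p.βm34 ∧ 0 < p.β200 ∧ 0 < p.βm200 ∧ 0 < p.E34 ∧ 0 < p.E200 ∧
  0 < p.ES ∧ 0 < p.EZ ∧ 0 < p.As ∧ 0 < p.Az ∧ 0 < p.γs ∧ 0 < p.γz ∧
  0 < p.cs ∧ 0 < p.cms ∧ 0 < p.cz ∧ 0 < p.cmz ∧
  0 < p.βs ∧ 0 < p.βs1 ∧ 0 < p.βs2 ∧ 0 < p.βz ∧ 0 < p.βz1 ∧ 0 < p.βz2 ∧
  0 < p.ks ∧ 0 < p.ks1 ∧ 0 < p.ks2 ∧ 0 < p.kms ∧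
  0 < p.kz ∧ 0 < p.kz1 ∧ 0 < p.kz2 ∧ 0 < p.kmz ∧ 0 < p.δz

/-- The mixed-inhibition conditions: miRNA binding accelerates mRNA degradation
(`βs < βs1 < βs2`, `βz < βz1 < βz2`) and inhibits translation
(`ks > ks1 > ks2`, `kz > kz1 > kz2`). -/
def MixedInhibition (p : EMTParams) : Prop :=
  p.βs < p.βs1 ∧ p.βs1 < p.βs2 ∧ p.βz < p.βz1 ∧ p.βz1 < p.βz2 ∧
  p.ks1 < p.ks ∧ p.ks2 < p.ks1 ∧ p.kz1 < p.kz ∧ p.kz2 < p.kz1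

def es1 (p : EMTParams) : ℝ := p.βs1 * p.βs2 + (p.βs1 + p.βs2) * p.cms + p.cms ^ 2
def es2 (p : EMTParams) : ℝ := p.cs * (p.βs2 + p.cms)
def es3 (p : EMTParams) : ℝ := p.βs * p.βs2 + p.βs1 * p.βs2 + p.βs1 * p.cms
def ez1 (p : EMTParams) : ℝ := p.βz1 * p.βz2 + (p.βz1 + p.βz2) * p.cmz + p.cmz ^ 2
def ez2 (p : EMTParams) : ℝ := p.cz * (p.βz2 + p.cmz)
def ez3 (p : EMTParams) : ℝ := p.βz * p.βz2 + p.βz1 * p.βz2 + p.βz1 * p.cmz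

/-- The vector field `G` of the reduced EMT/MET system, with state
`x = (μ34, s, μ200, z)`.  The quasi-steady-state mRNA vectors `ms`, `mz` have been
substituted, and the dot products `(ks,ks1,ks2)·ms` and `(kz,kz1,kz2)·mz` written
out explicitly. -/
noncomputable def G (p : EMTParams) (x : Fin 4 → ℝ) : Fin 4 → ℝ :=
  let μ34 := x 0
  let s := x 1
  let μ200 := x 2
  let z := x 3
  ![ p.β34 * p.E34 * p.As * p.Az / ((s ^ 2 + p.As) * (z ^ 2 + p.Az)) - p.βm34 * μ34,
     (p.γs * p.ES * p.As / ((s ^ 2 + p.As) *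
         (p.βs2 * p.cs ^ 2 * μ34 ^ 2 + p.es3 * p.cs * μ34 + p.es1 * p.βs))) *
       (p.ks * (p.βs2 * p.cs * μ34 + p.es1) + p.ks1 * (p.es2 * μ34)
          + p.ks2 * (p.cs ^ 2 * μ34 ^ 2)) - p.kms * s,
     p.β200 * p.E200 * p.As * p.Az / ((s ^ 2 + p.As) * (z ^ 2 + p.Az)) - p.βm200 * μ200,
     p.δz + (p.γz * p.EZ * s ^ 2 * z ^ 2 / ((s ^ 2 + p.As) * (z ^ 2 + p.Az) *
         (p.βz2 * p.cz ^ 2 * μ200 ^ 2 + p.ez3 * p.cz * μ200 + p.ez1 * p.βz))) *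
       (p.kz * (p.βz2 * p.cz * μ200 + p.ez1) + p.kz1 * (p.ez2 * μ200)
          + p.kz2 * (p.cz ^ 2 * μ200 ^ 2)) - p.kmz * z ]

end EMTParams

open EMTParams

/-- The boundary of the nonnegative orthant is repelling for the reduced EMT/MET
system: whenever a coordinate of `x ∈ [0,∞)⁴` vanishes, the corresponding
component of the vector field is strictly positive.  In particular `G` has no
equilibria on the boundary of `[0,∞)⁴`. -/
theorem boundary_repelling (p : EMTParams) (hpos : p.Pos) :
    (∀ x : Fin 4 → ℝ, (∀ i, 0 ≤ x i) → ∀ i, x i = 0 → 0 < p.G x i)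
    ∧ (∀ x : Fin 4 → ℝ, (∀ i, 0 ≤ x i) → (∃ i, x i = 0) → p.G x ≠ 0) := by
  obtain ⟨hβ34, hβm34, hβ200, hβm200, hE34, hE200, hES, hEZ, hAs, hAz, hγs, hγz,
    hcs, hcms, hcz, hcmz, hβs, hβs1, hβs2, hβz, hβz1, hβz2,
    hks, hks1, hks2, hkms, hkz, hkz1, hkz2, hkmz, hδz⟩ := hpos
  have hes1 : 0 < p.es1 := by unfold es1; positivity
  have hes2 : 0 < p.es2 := by unfold es2; positivity
  have hes3 : 0 < p.es3 := by unfold es3; positivity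
  have hez1 : 0 < p.ez1 := by unfold ez1; positivity
  have hez2 : 0 < p.ez2 := by unfold ez2; positivity
  have hez3 : 0 < p.ez3 := by unfold ez3; positivity
  have main : ∀ x : Fin 4 → ℝ, (∀ i, 0 ≤ x i) → ∀ i, x i = 0 → 0 < p.G x i := by
    intro x hx i hi
    have h0 := hx 0
    have h1 := hx 1
    have h2 := hx 2
    have h3 := hx 3
    fin_cases i
    · replace hi : x 0 = 0 := hi
      show 0 < p.G x 0
      simp only [G, Matrix.cons_val_zero]
      rw [hi, mul_zero, sub_zero]
      positivity
    · replace hi : x 1 = 0 := hi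
      show 0 < p.G x 1
      simp only [G, Matrix.cons_val_one, Matrix.head_cons, Matrix.cons_val_zero]
      rw [hi, mul_zero, sub_zero]
      positivity
    · replace hi : x 2 = 0 := hi
      show 0 < p.G x 2
      simp only [G, Matrix.cons_val_two, Matrix.tail_cons, Matrix.head_cons]
      rw [hi, mul_zero, sub_zero]
      positivity
    · replace hi : x 3 = 0 := hi
      show 0 < p.G x 3
      simp only [G, Matrix.cons_val_three, Matrix.tail_cons, Matrix.head_cons]
      rw [hi]
      norm_num
      positivity
  refine ⟨main, fun x hx ⟨i, hi⟩ h => ?_⟩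
  have := main x hx i hi
  rw [h] at this
  exact lt_irrefl 0 this
end

section
/- Let n ≥ 1 and let G : ℝⁿ → ℝⁿ be continuous on the closed nonnegative orthant [0,∞)ⁿ and satisfy: for every x ∈ [0,∞)ⁿ and every index i, if x_i = 0 then G_i(x) > 0. Let x : [0,∞) → (0,∞)ⁿ be a continuously differentiable solution of ẋ(t) = G(x(t)) whose image is bounded. Then every ω-limit point of x lies in the open positive orthant (0,∞)ⁿ; that is, the ω-limit set of the trajectory is disjoint from the boundary of [0,∞)ⁿ (persistence). -/
open Filter

/-- Persistence: if the boundary of the nonnegative orthant is repelling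
(`x_i = 0` implies `G_i(x) > 0`) and `x : [0,∞) → (0,∞)ⁿ` is a bounded solution of
`ẋ = G(x)`, then every ω-limit point of the trajectory lies in the open positive
orthant, i.e. the ω-limit set is disjoint from the boundary of `[0,∞)ⁿ`. -/
theorem omega_limit_in_open_orthant (n : ℕ) (hn : 1 ≤ n)
    (G : (Fin n → ℝ) → Fin n → ℝ)
    (hGcont : ContinuousOn G {x : Fin n → ℝ | ∀ i, 0 ≤ x i})
    (hrepel : ∀ x : Fin n → ℝ, (∀ i, 0 ≤ x i) → ∀ i, x i = 0 → 0 < G x i)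
    (x : ℝ → Fin n → ℝ)
    (hsol : ∀ t ∈ Set.Ici (0 : ℝ), HasDerivWithinAt x (G (x t)) (Set.Ici 0) t)
    (hxpos : ∀ t ∈ Set.Ici (0 : ℝ), ∀ i, 0 < x t i)
    (hbdd : Bornology.IsBounded (x '' Set.Ici 0))
    (pt : Fin n → ℝ)
    (hlim : ∃ tk : ℕ → ℝ, (∀ k, 0 ≤ tk k) ∧ Tendsto tk atTop atTop ∧
        Tendsto (fun k => x (tk k)) atTop (nhds pt)) :
    ∀ i, 0 < pt i := by
  intro i
  by_contra hpt
  push_neg at hpt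
  obtain ⟨tk, htk0, _, htkx⟩ := hlim
  set K0 := closure (x '' Set.Ici 0) with hK0def
  have hK0cl : IsClosed K0 := isClosed_closure
  have hK0cpt : IsCompact K0 :=
    Metric.isCompact_of_isClosed_isBounded hK0cl hbdd.closure
  have horthcl : IsClosed {y : Fin n → ℝ | ∀ j, 0 ≤ y j} := by
    have : {y : Fin n → ℝ | ∀ j, 0 ≤ y j} = ⋂ j, {y : Fin n → ℝ | 0 ≤ y j} := by
      ext y; simp
    rw [this]
    exact isClosed_iInter fun j => isClosed_le continuous_const (continuous_apply j)
  have hK0orth : K0 ⊆ {y : Fin n → ℝ | ∀ j, 0 ≤ y j} := by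
    apply closure_minimal _ horthcl
    rintro y ⟨u, hu, rfl⟩ j
    exact (hxpos u hu j).le
  have hxK0 : ∀ u ∈ Set.Ici (0 : ℝ), x u ∈ K0 := fun u hu =>
    subset_closure ⟨u, hu, rfl⟩
  have hGi : ContinuousOn (fun y => G y i) K0 :=
    (continuous_apply i).comp_continuousOn (hGcont.mono hK0orth)
  -- Step 1: find δ > 0 such that G y i > 0 whenever y ∈ K0 and y i < δ
  have hδ : ∃ δ > (0:ℝ), ∀ y ∈ K0, y i < δ → 0 < G y i := by
    set S := {y ∈ K0 | G y i ≤ 0} with hSdef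
    have hScl : IsClosed S :=
      hGi.preimage_isClosed_of_isClosed hK0cl isClosed_Iic
    rcases S.eq_empty_or_nonempty with hS | hS
    · refine ⟨1, one_pos, fun y hy _ => ?_⟩
      by_contra hle
      exact absurd (hSdef ▸ (⟨hy, not_lt.mp hle⟩ : y ∈ S)) (hS ▸ Set.notMem_empty y)
    · have hScpt : IsCompact S := hK0cpt.of_isClosed_subset hScl (Set.sep_subset _ _)
      obtain ⟨y0, hy0S, hy0min⟩ :=
        hScpt.exists_isMinOn hS ((continuous_apply i).continuousOn)
      have hy0pos : 0 < y0 i := by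
        rcases lt_or_eq_of_le (hK0orth hy0S.1 i) with h | h
        · exact h
        · exact absurd (hrepel y0 (hK0orth hy0S.1) i h.symm) (not_lt.mpr hy0S.2)
      refine ⟨y0 i, hy0pos, fun y hy hlt => ?_⟩
      by_contra hle
      exact absurd hlt (not_lt.mpr (hy0min ⟨hy, not_lt.mp hle⟩))
  obtain ⟨δ, hδpos, hδ⟩ := hδ
  -- Step 2: a uniform positive lower bound for x · i
  have key : ∃ c > (0:ℝ), ∀ u ∈ Set.Ici (0:ℝ), c ≤ x u i := by
    set K1 := {y ∈ K0 | y i ≤ δ / 2} with hK1def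
    rcases K1.eq_empty_or_nonempty with hK1 | hK1
    · refine ⟨δ / 2, by linarith, fun u hu => ?_⟩
      by_contra hle
      exact absurd (hK1def ▸ (⟨hxK0 u hu, (not_le.mp hle).le⟩ : x u ∈ K1))
        (hK1 ▸ Set.notMem_empty (x u))
    · have hK1cl : IsClosed K1 :=
        ((continuous_apply i).continuousOn).preimage_isClosed_of_isClosed hK0cl isClosed_Iic
      have hK1cpt : IsCompact K1 := hK0cpt.of_isClosed_subset hK1cl (Set.sep_subset _ _)
      obtain ⟨y1, hy1K, hy1min⟩ := hK1cpt.exists_isMinOn hK1 (hGi.mono (Set.sep_subset _ _))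
      have hεpos : 0 < G y1 i := hδ y1 hy1K.1 (by linarith [hy1K.2])
      set ε := G y1 i with hεdef
      -- lower bound along the trajectory
      have hx0 : 0 < x 0 i := hxpos 0 Set.self_mem_Ici i
      refine ⟨min (δ / 2) (x 0 i), lt_min (by linarith) hx0, fun t ht => ?_⟩
      set c := min (δ / 2) (x 0 i) with hcdef
      by_contra hlt
      push_neg at hlt
      have hxcont : ContinuousOn x (Set.Ici 0) := fun u hu => (hsol u hu).continuousWithinAt
      have hxicont : ContinuousOn (fun r => x r i) (Set.Ici 0) :=
        (continuous_apply i).comp_continuousOn hxcont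
      set A := {u ∈ Set.Icc (0:ℝ) t | c ≤ x u i} with hAdef
      have hA0 : (0:ℝ) ∈ A := ⟨⟨le_rfl, ht⟩, min_le_right _ _⟩
      have hAbdd : BddAbove A := ⟨t, fun u hu => hu.1.2⟩
      have hAcl : IsClosed A :=
        ((hxicont.mono Set.Icc_subset_Ici_self).preimage_isClosed_of_isClosed
          isClosed_Icc isClosed_Ici)
      have hsA : sSup A ∈ A := hAcl.csSup_mem ⟨0, hA0⟩ hAbdd
      set s := sSup A with hsdef
      have hs0 : 0 ≤ s := hsA.1.1
      have hst : s < t := by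
        rcases lt_or_eq_of_le hsA.1.2 with h | h
        · exact h
        · exact absurd (h ▸ hsA.2) (not_le.mpr hlt)
      have hmono : StrictMonoOn (fun r => x r i) (Set.Icc s t) := by
        apply strictMonoOn_of_deriv_pos (convex_Icc s t)
        · exact hxicont.mono (fun u hu => le_trans hs0 hu.1)
        · intro u hu
          rw [interior_Icc] at hu
          have hu0 : 0 < u := lt_of_le_of_lt hs0 hu.1
          have hda : HasDerivAt x (G (x u)) u :=
            (hsol u hu0.le).hasDerivAt (Ici_mem_nhds hu0)
          have hdi : HasDerivAt (fun r => x r i) (G (x u) i) u := hasDerivAt_pi.mp hda i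
          rw [hdi.deriv]
          have hnotA : u ∉ A := fun hmem => absurd (le_csSup hAbdd hmem) (not_le.mpr hu.1)
          have hxui : x u i < c := by
            by_contra hge
            exact hnotA ⟨⟨hu0.le, hu.2.le⟩, not_lt.mp hge⟩
          have hxuK1 : x u ∈ K1 :=
            ⟨hxK0 u hu0.le, le_trans hxui.le (min_le_left _ _)⟩
          exact lt_of_lt_of_le hεpos (hy1min hxuK1)
      have := hmono (Set.left_mem_Icc.mpr hst.le) (Set.right_mem_Icc.mpr hst.le) hst
      have hcs : c ≤ x s i := hsA.2
      simp only at this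
      linarith
  obtain ⟨c, hcpos, hclb⟩ := key
  have htend : Tendsto (fun k => x (tk k) i) atTop (nhds (pt i)) :=
    ((continuous_apply i).tendsto pt).comp htkx
  have : c ≤ pt i := ge_of_tendsto' htend (fun k => hclb (tk k) (htk0 k))
  linarith
end

section
/- (Kamke's condition implies monotonicity.) Let W ⊆ ℝⁿ be open and p-convex with respect to ≤_σ for some σ ∈ {−1,1}ⁿ, and let F : W → ℝⁿ be continuously differentiable with Jacobian J(x) = ∂F/∂x. Assume σ_i σ_j J_{ij}(x) ≥ 0 for all i ≠ j and all x ∈ W (i.e., Σ J(x) Σ is Metzler, where Σ = diag(σ)). Then the flow of ẋ = F(x) is monotone with respect to ≤_σ: if x, y : [0,T] → W are solutions of ẋ = F(x) and ẏ = F(y) with x(0) ≤_σ y(0), then x(t) ≤_σ y(t) for all t ∈ [0,T]. -/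
open Set Filter Topology


lemma kamke_quasi (n : ℕ) (σ : Fin n → ℝ) (hσ : ∀ i, σ i = 1 ∨ σ i = -1)
    (W : Set (Fin n → ℝ))
    (hpconv : ∀ u ∈ W, ∀ v ∈ W, (∀ i, σ i * u i ≤ σ i * v i) →
        ∀ t ∈ Set.Icc (0 : ℝ) 1, (1 - t) • u + t • v ∈ W)
    (F : (Fin n → ℝ) → Fin n → ℝ)
    (J : (Fin n → ℝ) → (Fin n → ℝ) →L[ℝ] (Fin n → ℝ))
    (hF : ∀ x ∈ W, HasFDerivAt F (J x) x)
    (hKamke : ∀ x ∈ W, ∀ i j, i ≠ j → 0 ≤ σ i * σ j * (J x (Pi.single j 1) i))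
    (z b : Fin n → ℝ) (hz : z ∈ W) (hb : b ∈ W)
    (hle : ∀ j, σ j * z j ≤ σ j * b j) (i : Fin n) (hzi : z i = b i) :
    σ i * F z i ≤ σ i * F b i := by
  have hσsq : ∀ j, σ j * σ j = 1 := by
    intro j; rcases hσ j with h | h <;> rw [h] <;> norm_num
  set γ : ℝ → Fin n → ℝ := fun s => (1 - s) • z + s • b with hγ
  have hγmem : ∀ s ∈ Set.Icc (0:ℝ) 1, γ s ∈ W := fun s hs => hpconv z hz b hb hle s hs
  have hγder : ∀ s : ℝ, HasDerivAt γ (b - z) s := by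
    intro s
    have h1 : HasDerivAt (fun s : ℝ => z + s • (b - z)) ((1:ℝ) • (b - z)) s :=
      ((hasDerivAt_id s).smul_const (b - z)).const_add z
    rw [one_smul] at h1
    convert h1 using 2 with s
    funext j
    simp [hγ]
    ring
  set g : ℝ → ℝ := fun s => σ i * F (γ s) i with hg
  have hgder : ∀ s ∈ Set.Icc (0:ℝ) 1, HasDerivAt g (σ i * (J (γ s) (b - z) i)) s := by
    intro s hs
    have h1 : HasDerivAt (fun s => F (γ s)) (J (γ s) (b - z)) s :=
      (hF _ (hγmem s hs)).comp_hasDerivAt s (hγder s)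
    exact (hasDerivAt_pi.1 h1 i).const_mul (σ i)
  have hvi : (b - z) i = 0 := by simp [hzi]
  have hnonneg : ∀ p ∈ W, 0 ≤ σ i * (J p (b - z) i) := by
    intro p hp
    have hv : (b - z) = ∑ j, (b - z) j • (Pi.single j 1 : Fin n → ℝ) := by
      funext k
      rw [Finset.sum_apply]
      simp [Pi.single_apply]
    have hJv : J p (b - z) i = ∑ j, (b - z) j * (J p (Pi.single j 1) i) := by
      conv_lhs => rw [hv]
      rw [map_sum, Finset.sum_apply]
      congr 1; funext j
      rw [map_smul]
      simp
    rw [hJv, Finset.mul_sum]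
    apply Finset.sum_nonneg
    intro j _
    rcases eq_or_ne j i with rfl | hji
    · rw [hvi]; ring_nf; exact le_refl 0
    · have h1 : 0 ≤ σ j * (b - z) j := by
        have := hle j; simp only [Pi.sub_apply]; nlinarith [hle j]
      have h2 := hKamke p hp i j (Ne.symm hji)
      have key : (σ j * (b - z) j) * (σ i * σ j * (J p (Pi.single j 1) i))
          = (σ j * σ j) * (σ i * ((b - z) j * (J p (Pi.single j 1) i))) := by ring
      rw [hσsq j, one_mul] at key
      rw [← key]
      exact mul_nonneg h1 h2
  have hmono : MonotoneOn g (Set.Icc (0:ℝ) 1) := by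
    apply monotoneOn_of_deriv_nonneg (convex_Icc 0 1)
    · exact fun s hs => ((hgder s hs).continuousAt).continuousWithinAt
    · intro s hs
      exact ((hgder s (interior_subset hs)).differentiableAt).differentiableWithinAt
    · intro s hs
      rw [(hgder s (interior_subset hs)).deriv]
      exact hnonneg _ (hγmem s (interior_subset hs))
  have h01 := hmono (Set.left_mem_Icc.2 zero_le_one) (Set.right_mem_Icc.2 zero_le_one) zero_le_one
  have hγ0 : γ 0 = z := by funext j; simp [hγ]
  have hγ1 : γ 1 = b := by funext j; simp [hγ]
  rw [hg] at h01
  simp only [hγ0, hγ1] at h01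
  exact h01

/-- Kamke's condition implies monotonicity: if `W` is open and p-convex with respect
to the orthant order `≤_σ`, and the Jacobian `J` of the `C¹` vector field `F`
satisfies `σ_i σ_j J_{ij}(x) ≥ 0` for all `i ≠ j` and `x ∈ W` (i.e. `Σ J(x) Σ` is
Metzler), then the flow of `ẋ = F(x)` is monotone with respect to `≤_σ`: ordered
initial conditions remain ordered. -/
theorem kamke_implies_monotone (n : ℕ) (σ : Fin n → ℝ)
    (hσ : ∀ i, σ i = 1 ∨ σ i = -1)
    (W : Set (Fin n → ℝ)) (hWopen : IsOpen W)
    (hpconv : ∀ u ∈ W, ∀ v ∈ W, (∀ i, σ i * u i ≤ σ i * v i) →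
        ∀ t ∈ Set.Icc (0 : ℝ) 1, (1 - t) • u + t • v ∈ W)
    (F : (Fin n → ℝ) → Fin n → ℝ)
    (J : (Fin n → ℝ) → (Fin n → ℝ) →L[ℝ] (Fin n → ℝ))
    (hF : ∀ x ∈ W, HasFDerivAt F (J x) x)
    (hJcont : ContinuousOn J W)
    (hKamke : ∀ x ∈ W, ∀ i j, i ≠ j → 0 ≤ σ i * σ j * (J x (Pi.single j 1) i))
    (T : ℝ) (hT : 0 ≤ T)
    (x y : ℝ → Fin n → ℝ)
    (hxW : ∀ t ∈ Set.Icc 0 T, x t ∈ W)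
    (hyW : ∀ t ∈ Set.Icc 0 T, y t ∈ W)
    (hx : ∀ t ∈ Set.Icc 0 T, HasDerivWithinAt x (F (x t)) (Set.Icc 0 T) t)
    (hy : ∀ t ∈ Set.Icc 0 T, HasDerivWithinAt y (F (y t)) (Set.Icc 0 T) t)
    (h0 : ∀ i, σ i * x 0 i ≤ σ i * y 0 i) :
    ∀ t ∈ Set.Icc 0 T, ∀ i, σ i * x t i ≤ σ i * y t i := by
  have hσsq : ∀ j, σ j * σ j = 1 := by
    intro j; rcases hσ j with h | h <;> rw [h] <;> norm_num
  have hσabs : ∀ j, |σ j| = 1 := by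
    intro j; rcases hσ j with h | h <;> rw [h] <;> norm_num
  have hxcont : ContinuousOn x (Set.Icc 0 T) := fun t ht => (hx t ht).continuousWithinAt
  have hycont : ContinuousOn y (Set.Icc 0 T) := fun t ht => (hy t ht).continuousWithinAt
  set Kx : Set (Fin n → ℝ) := x '' Set.Icc 0 T with hKxdef
  have hKxcomp : IsCompact Kx := isCompact_Icc.image_of_continuousOn hxcont
  have hKxW : Kx ⊆ W := by rintro _ ⟨t, ht, rfl⟩; exact hxW t ht
  obtain ⟨δ, hδpos, hδsub⟩ := hKxcomp.exists_thickening_subset_open hWopen hKxW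
  set C : Set (Fin n → ℝ) := Metric.cthickening (δ/2) Kx with hCdef
  have hCW : C ⊆ W :=
    (Metric.cthickening_subset_thickening' hδpos (by linarith) Kx).trans hδsub
  have hCcomp : IsCompact C := hKxcomp.cthickening
  obtain ⟨L0, hL0⟩ := hCcomp.exists_bound_of_continuousOn (hJcont.mono hCW)
  set L : ℝ := max L0 0 with hLdef
  have hL : 0 ≤ L := le_max_right _ _
  set K : ℝ := L + 1 with hKdef
  have hKpos : 0 < K := by rw [hKdef]; linarith
  -- Main claim: the perturbed order is preserved.
  have key : ∀ ε : ℝ, 0 < ε → ε ≤ δ/2 * Real.exp (-(K*T)) →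
      ∀ t ∈ Set.Icc 0 T, ∀ i, σ i * x t i < σ i * y t i + ε * Real.exp (K * t) := by
    intro ε hεpos hεle
    by_contra hcon
    push_neg at hcon
    obtain ⟨t1, ht1, i1, hi1⟩ := hcon
    set φ : Fin n → ℝ → ℝ :=
      fun i t => σ i * y t i + ε * Real.exp (K * t) - σ i * x t i with hφdef
    have hφcont : ∀ i, ContinuousOn (φ i) (Set.Icc 0 T) := by
      intro i
      apply ContinuousOn.sub
      · apply ContinuousOn.add
        · exact continuousOn_const.mul ((continuous_apply i).comp_continuousOn hycont)
        · exact (continuous_const.mul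
            (Real.continuous_exp.comp (continuous_const.mul continuous_id))).continuousOn
      · exact continuousOn_const.mul ((continuous_apply i).comp_continuousOn hxcont)
    set S : Set ℝ := {t | t ∈ Set.Icc 0 T ∧ ∃ i, φ i t ≤ 0} with hSdef
    have hSne : S.Nonempty := ⟨t1, ht1, i1, by simp only [hφdef]; linarith⟩
    have hSclosed : IsClosed S := by
      have hSeq : S = ⋃ i, (Set.Icc 0 T ∩ (φ i) ⁻¹' Set.Iic 0) := by
        ext t
        simp only [hSdef, Set.mem_setOf_eq, Set.mem_iUnion, Set.mem_inter_iff,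
          Set.mem_preimage, Set.mem_Iic]
        tauto
      rw [hSeq]
      exact isClosed_iUnion_of_finite fun i =>
        (hφcont i).preimage_isClosed_of_isClosed isClosed_Icc isClosed_Iic
    have hSbdd : BddBelow S := ⟨0, fun t ht => ht.1.1⟩
    set t0 := sInf S with ht0def
    have ht0S : t0 ∈ S := hSclosed.csInf_mem hSne hSbdd
    obtain ⟨ht0Icc, i, hφi0⟩ := ht0S
    have hlow : ∀ s, 0 ≤ s → s < t0 → ∀ j, 0 < φ j s := by
      intro s hs0 hst0 j
      by_contra hle
      push_neg at hle
      have hsS : s ∈ S := ⟨⟨hs0, le_trans hst0.le ht0Icc.2⟩, j, hle⟩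
      exact absurd (csInf_le hSbdd hsS) (not_le.2 hst0)
    have ht0pos : 0 < t0 := by
      rcases eq_or_lt_of_le ht0Icc.1 with h | h
      · exfalso
        rw [← h] at hφi0
        have hv : φ i 0 = σ i * y 0 i + ε - σ i * x 0 i := by
          simp only [hφdef, mul_zero, Real.exp_zero, mul_one]
        rw [hv] at hφi0
        linarith [h0 i]
      · exact h
    haveI hne : (𝓝[Set.Ico 0 t0] t0).NeBot := by
      rw [← mem_closure_iff_nhdsWithin_neBot, closure_Ico (ne_of_lt ht0pos)]
      exact Set.right_mem_Icc.2 ht0pos.le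
    have hIcoIcc : Set.Ico 0 t0 ⊆ Set.Icc 0 T :=
      fun s hs => ⟨hs.1, le_trans hs.2.le ht0Icc.2⟩
    have hφnonneg : ∀ j, 0 ≤ φ j t0 := by
      intro j
      have hcw : Filter.Tendsto (φ j) (𝓝[Set.Ico 0 t0] t0) (𝓝 (φ j t0)) :=
        ((hφcont j) t0 ht0Icc).mono hIcoIcc
      exact ge_of_tendsto hcw (Filter.eventually_of_mem self_mem_nhdsWithin
        fun s hs => (hlow s hs.1 hs.2 j).le)
    set a := x t0 with hadef
    set b := y t0 with hbdef
    have haW : a ∈ W := hxW t0 ht0Icc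
    have hbW : b ∈ W := hyW t0 ht0Icc
    set e := ε * Real.exp (K * t0) with hedef
    have hepos : 0 < e := by rw [hedef]; positivity
    have hx_le : ∀ j, σ j * a j ≤ σ j * b j + e := by
      intro j
      have h := hφnonneg j
      simp only [hφdef] at h
      rw [hadef, hbdef, hedef]; linarith
    have hba_i : σ i * b i + e ≤ σ i * a i := by
      simp only [hφdef] at hφi0
      rw [hadef, hbdef, hedef]; linarith
    have heδ : e ≤ δ/2 := by
      have h1 : Real.exp (K * t0) ≤ Real.exp (K * T) :=
        Real.exp_le_exp.2 (mul_le_mul_of_nonneg_left ht0Icc.2 hKpos.le)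
      have h2 : e ≤ (δ/2 * Real.exp (-(K*T))) * Real.exp (K*T) := by
        rw [hedef]
        exact mul_le_mul hεle h1 (Real.exp_nonneg _) (by positivity)
      calc e ≤ (δ/2 * Real.exp (-(K*T))) * Real.exp (K*T) := h2
        _ = δ/2 * Real.exp (-(K*T) + K*T) := by rw [mul_assoc, Real.exp_add]
        _ = δ/2 := by norm_num
    set z : Fin n → ℝ := fun j => σ j * min (σ j * a j) (σ j * b j) with hzdef
    have hσz : ∀ j, σ j * z j = min (σ j * a j) (σ j * b j) := by
      intro j
      simp only [hzdef]
      rw [← mul_assoc, hσsq j, one_mul]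
    have hz_le_b : ∀ j, σ j * z j ≤ σ j * b j := fun j => (hσz j) ▸ min_le_right _ _
    have hzi : z i = b i := by
      have h1 : σ i * z i = σ i * b i := by
        rw [hσz i, min_eq_right]; linarith
      calc z i = (σ i * σ i) * z i := by rw [hσsq i, one_mul]
        _ = σ i * (σ i * z i) := by ring
        _ = σ i * (σ i * b i) := by rw [h1]
        _ = (σ i * σ i) * b i := by ring
        _ = b i := by rw [hσsq i, one_mul]
    have hdist : ∀ j, |a j - z j| ≤ e := by
      intro j
      have h2 : 0 ≤ σ j * a j - σ j * z j := by
        rw [hσz j]; exact sub_nonneg.2 (min_le_left _ _)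
      have h3 : σ j * a j - σ j * z j ≤ e := by
        rw [hσz j]
        rcases min_cases (σ j * a j) (σ j * b j) with ⟨hm, _⟩ | ⟨hm, _⟩
        · rw [hm]; linarith
        · rw [hm]; linarith [hx_le j]
      have habs : |a j - z j| = |σ j * a j - σ j * z j| := by
        rw [← mul_sub, abs_mul, hσabs j, one_mul]
      rw [habs, abs_of_nonneg h2]
      exact h3
    have hznorm : ‖a - z‖ ≤ e := by
      rw [pi_norm_le_iff_of_nonneg hepos.le]
      intro j
      simpa [Real.norm_eq_abs] using hdist j
    set B := Metric.closedBall a (δ/2) with hBdef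
    have haKx : a ∈ Kx := ⟨t0, ht0Icc, rfl⟩
    have hBC : B ⊆ C := Metric.closedBall_subset_cthickening haKx (δ/2)
    have hBW : B ⊆ W := hBC.trans hCW
    have haB : a ∈ B := Metric.mem_closedBall_self (by linarith)
    have hzB : z ∈ B := by
      rw [hBdef, Metric.mem_closedBall, dist_eq_norm]
      calc ‖z - a‖ = ‖a - z‖ := by rw [norm_sub_rev]
        _ ≤ e := hznorm
        _ ≤ δ/2 := heδ
    have hLip : ‖F a - F z‖ ≤ L * ‖a - z‖ :=
      (convex_closedBall a (δ/2)).norm_image_sub_le_of_norm_hasFDerivWithin_le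
        (fun p hp => (hF p (hBW hp)).hasFDerivWithinAt)
        (fun p hp => le_trans (hL0 p (hBC hp)) (le_max_left _ _))
        hzB haB
    have hquasi : σ i * F z i ≤ σ i * F b i :=
      kamke_quasi n σ hσ W hpconv F J hF hKamke z b (hBW hzB) hbW hz_le_b i hzi
    -- derivative of φ i at t0 within Icc 0 T
    have hxi : HasDerivWithinAt (fun t => x t i) (F a i) (Set.Icc 0 T) t0 :=
      hasDerivWithinAt_pi.1 (hx t0 ht0Icc) i
    have hyi : HasDerivWithinAt (fun t => y t i) (F b i) (Set.Icc 0 T) t0 :=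
      hasDerivWithinAt_pi.1 (hy t0 ht0Icc) i
    have hexp : HasDerivWithinAt (fun t : ℝ => ε * Real.exp (K * t))
        (ε * (Real.exp (K * t0) * K)) (Set.Icc 0 T) t0 := by
      have h1 : HasDerivAt (fun t : ℝ => Real.exp (K * t)) (Real.exp (K * t0) * K) t0 := by
        have h2 : HasDerivAt (fun t : ℝ => K * t) K t0 := by
          simpa using (hasDerivAt_id t0).const_mul K
        exact (Real.hasDerivAt_exp (K * t0)).comp t0 h2
      exact (h1.const_mul ε).hasDerivWithinAt
    set c : ℝ := σ i * F b i + ε * (Real.exp (K * t0) * K) - σ i * F a i with hcdef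
    have hφder : HasDerivWithinAt (φ i) c (Set.Icc 0 T) t0 := by
      rw [hcdef]
      simp only [hφdef]
      exact ((hyi.const_mul (σ i)).add hexp).sub (hxi.const_mul (σ i))
    have hcle : c ≤ 0 := by
      have hres : HasDerivWithinAt (φ i) c (Set.Ico 0 t0) t0 := hφder.mono hIcoIcc
      rw [hasDerivWithinAt_iff_tendsto_slope' (fun h => lt_irrefl t0 h.2)] at hres
      refine le_of_tendsto hres (Filter.eventually_of_mem self_mem_nhdsWithin ?_)
      intro s hs
      have h1 : 0 < φ i s := hlow s hs.1 hs.2 i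
      have h2 : 0 < φ i s - φ i t0 := by linarith
      have h3 : s - t0 < 0 := sub_neg.2 hs.2
      rw [slope_def_field]
      exact (div_neg_of_pos_of_neg h2 h3).le
    have hcpos : 0 < c := by
      have h2 : σ i * (F a i - F z i) ≤ |F a i - F z i| := by
        calc σ i * (F a i - F z i) ≤ |σ i * (F a i - F z i)| := le_abs_self _
          _ = |F a i - F z i| := by rw [abs_mul, hσabs i, one_mul]
      have h3 : |F a i - F z i| ≤ ‖F a - F z‖ := by
        simpa [Real.norm_eq_abs] using norm_le_pi_norm (F a - F z) i
      have h4 : L * ‖a - z‖ ≤ L * e := mul_le_mul_of_nonneg_left hznorm hL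
      have h5 : ε * (Real.exp (K*t0) * K) = L * e + e := by
        rw [hedef, hKdef]; ring
      have h6 : σ i * F a i - σ i * F z i = σ i * (F a i - F z i) := by ring
      rw [hcdef, h5]
      linarith [hquasi, hLip]
    linarith
  -- conclude by letting ε → 0
  intro t ht i
  by_contra hlt
  push_neg at hlt
  set d := σ i * x t i - σ i * y t i with hddef
  have hdpos : 0 < d := by rw [hddef]; linarith
  set M := Real.exp (K * T) with hMdef
  have hMpos : 0 < M := Real.exp_pos _
  set ε := min (δ/2 * Real.exp (-(K*T))) (d / M) with hεdef
  have hεpos : 0 < ε := lt_min (by positivity) (by positivity)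
  have hk := key ε hεpos (min_le_left _ _) t ht i
  have hexple : Real.exp (K * t) ≤ M :=
    Real.exp_le_exp.2 (mul_le_mul_of_nonneg_left ht.2 hKpos.le)
  have h7 : ε * Real.exp (K*t) ≤ (d/M) * M :=
    mul_le_mul (min_le_right _ _) hexple (Real.exp_nonneg _) (by positivity)
  have hdm : (d/M)*M = d := div_mul_cancel₀ d (ne_of_gt hMpos)
  rw [hddef] at hdm
  linarith
end

section
/- (Positive Loop Property.) Let n ≥ 1 and let ε : {1,…,n} × {1,…,n} → {−1, 0, 1} encode the off-diagonal sign pattern of a sign-stable Jacobian (ε(i,j) is the sign of J_{ij} for i ≠ j). Form the undirected signed graph G on vertices {1,…,n} with an edge {i,j} (i ≠ j) whenever ε(i,j) ≠ 0 or ε(j,i) ≠ 0, and assign the edge the sign s(i,j) ∈ {−1,1} of a nonzero value among ε(i,j), ε(j,i). Assume every loop of G is positive, meaning: (a) for all i ≠ j, ε(i,j)·ε(j,i) ≥ 0 (so edge signs are well defined and every 2-cycle is positive), and (b) for every cycle v₀, v₁, …, v_k = v₀ of distinct vertices (k ≥ 3) with {v_{m}, v_{m+1}} an edge of G for each m, the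 product s(v₀,v₁)·s(v₁,v₂)⋯s(v_{k−1},v_k) equals +1. Then there exists σ ∈ {−1,1}ⁿ such that σ_i σ_j ε(i,j) ≥ 0 for all i ≠ j. -/
open SimpleGraph

namespace PLP

variable {n : ℕ}

def G (ε : Fin n → Fin n → ℤ) : SimpleGraph (Fin n) where
  Adj i j := i ≠ j ∧ (ε i j ≠ 0 ∨ ε j i ≠ 0)
  symm := ⟨fun i j h => ⟨h.1.symm, h.2.symm⟩⟩
  loopless := ⟨fun i h => h.1 rfl⟩

def s (ε : Fin n → Fin n → ℤ) (i j : Fin n) : ℤ :=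
  if ε i j ≠ 0 then ε i j else ε j i

lemma s_symm (ε : Fin n → Fin n → ℤ)
    (hval : ∀ i j, ε i j = -1 ∨ ε i j = 0 ∨ ε i j = 1)
    (h2cycle : ∀ i j, i ≠ j → 0 ≤ ε i j * ε j i)
    (i j : Fin n) (hij : i ≠ j) : s ε i j = s ε j i := by
  have h2 := h2cycle i j hij
  rcases hval i j with h | h | h <;> rcases hval j i with h' | h' | h' <;>
    rw [h, h'] at h2 <;> norm_num at h2 <;> simp [s, h, h']

lemma s_cases (ε : Fin n → Fin n → ℤ)
    (hval : ∀ i j, ε i j = -1 ∨ ε i j = 0 ∨ ε i j = 1)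
    {i j : Fin n} (h : (G ε).Adj i j) : s ε i j = 1 ∨ s ε i j = -1 := by
  rcases h.2 with h0 | h0 <;> rcases hval i j with h1 | h1 | h1 <;>
    rcases hval j i with h2 | h2 | h2 <;> simp [s, h1, h2] at h0 ⊢

lemma s_mul_self (ε : Fin n → Fin n → ℤ)
    (hval : ∀ i j, ε i j = -1 ∨ ε i j = 0 ∨ ε i j = 1)
    {i j : Fin n} (h : (G ε).Adj i j) : s ε i j * s ε i j = 1 := by
  rcases s_cases ε hval h with h1 | h1 <;> rw [h1] <;> norm_num

def signW (ε : Fin n → Fin n → ℤ) {u v : Fin n} (p : (G ε).Walk u v) : ℤ :=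
  (p.darts.map (fun d => s ε d.fst d.snd)).prod

lemma signW_nil (ε : Fin n → Fin n → ℤ) {u : Fin n} :
    signW ε (Walk.nil : (G ε).Walk u u) = 1 := rfl

lemma signW_cons (ε : Fin n → Fin n → ℤ) {u v w : Fin n} (h : (G ε).Adj u v)
    (p : (G ε).Walk v w) : signW ε (Walk.cons h p) = s ε u v * signW ε p := by
  simp [signW, Walk.darts_cons]

lemma signW_append (ε : Fin n → Fin n → ℤ) {u v w : Fin n} (p : (G ε).Walk u v)
    (q : (G ε).Walk v w) : signW ε (p.append q) = signW ε p * signW ε q := by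
  simp [signW, Walk.darts_append]

lemma signW_copy (ε : Fin n → Fin n → ℤ) {u v u' v' : Fin n} (p : (G ε).Walk u v)
    (hu : u = u') (hv : v = v') : signW ε (p.copy hu hv) = signW ε p := by
  subst hu; subst hv; rfl

lemma signW_reverse (ε : Fin n → Fin n → ℤ)
    (hval : ∀ i j, ε i j = -1 ∨ ε i j = 0 ∨ ε i j = 1)
    (h2cycle : ∀ i j, i ≠ j → 0 ≤ ε i j * ε j i)
    {u v : Fin n} (p : (G ε).Walk u v) : signW ε p.reverse = signW ε p := by
  unfold signW
  rw [Walk.darts_reverse, List.map_reverse, List.prod_reverse, List.map_map]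
  congr 1
  apply List.map_congr_left
  intro d _
  exact s_symm ε hval h2cycle d.snd d.fst d.adj.ne'

lemma signW_mul_self (ε : Fin n → Fin n → ℤ)
    (hval : ∀ i j, ε i j = -1 ∨ ε i j = 0 ∨ ε i j = 1)
    {u v : Fin n} (p : (G ε).Walk u v) : signW ε p * signW ε p = 1 := by
  induction p with
  | nil => rfl
  | cons h p ih =>
    rw [signW_cons, mul_mul_mul_comm, s_mul_self ε hval h, ih, mul_one]

lemma signW_rotate (ε : Fin n → Fin n → ℤ) {u x : Fin n} (c : (G ε).Walk u u)
    (hx : x ∈ c.support) : signW ε (c.rotate x hx) = signW ε c := by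
  unfold signW
  exact (((c.rotate_darts x hx).map _).perm).prod_eq

lemma exists_cons_of_ne {u v : Fin n} {ε : Fin n → Fin n → ℤ} (p : (G ε).Walk u v)
    (hne : u ≠ v) : ∃ (y : Fin n) (h : (G ε).Adj u y) (p' : (G ε).Walk y v),
      p = Walk.cons h p' := by
  cases p with
  | nil => exact absurd rfl hne
  | cons h p' => exact ⟨_, h, p', rfl⟩

lemma signW_eq_prod_range (ε : Fin n → Fin n → ℤ) {u v : Fin n} (p : (G ε).Walk u v) :
    signW ε p = ∏ m ∈ Finset.range p.length, s ε (p.getVert m) (p.getVert (m + 1)) := by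
  induction p with
  | nil => rfl
  | cons h p ih =>
    rw [Walk.length_cons, Finset.prod_range_succ', signW_cons, ih, mul_comm]
    simp [Walk.getVert_cons_succ, Walk.getVert_zero]

lemma getVert_injOn_of_nodup {ε : Fin n → Fin n → ℤ} :
    ∀ {u v : Fin n} (p : (G ε).Walk u v), p.support.Nodup →
      ∀ a, a ≤ p.length → ∀ b, b ≤ p.length → p.getVert a = p.getVert b → a = b := by
  intro u v p
  induction p with
  | nil => intro _ a ha b hb _; simp [Walk.length_nil] at ha hb; omega
  | cons h p ih =>
    intro hnd a ha b hb hab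
    rw [Walk.support_cons, List.nodup_cons] at hnd
    rw [Walk.length_cons] at ha hb
    match a, b with
    | 0, 0 => rfl
    | 0, b + 1 =>
      exfalso
      rw [Walk.getVert_zero, Walk.getVert_cons_succ] at hab
      exact hnd.1 (Walk.mem_support_iff_exists_getVert.mpr ⟨b, hab.symm, by omega⟩)
    | a + 1, 0 =>
      exfalso
      rw [Walk.getVert_zero, Walk.getVert_cons_succ] at hab
      exact hnd.1 (Walk.mem_support_iff_exists_getVert.mpr ⟨a, hab, by omega⟩)
    | a + 1, b + 1 =>
      rw [Walk.getVert_cons_succ, Walk.getVert_cons_succ] at hab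
      have := ih hnd.2 a (by omega) b (by omega) hab
      omega


lemma signW_closed (ε : Fin n → Fin n → ℤ)
    (hval : ∀ i j, ε i j = -1 ∨ ε i j = 0 ∨ ε i j = 1)
    (h2cycle : ∀ i j, i ≠ j → 0 ≤ ε i j * ε j i)
    (hcycle : ∀ k : ℕ, 3 ≤ k → ∀ v : ℕ → Fin n,
        (∀ a < k, ∀ b < k, v a = v b → a = b) →
        v k = v 0 →
        (∀ m < k, ε (v m) (v (m + 1)) ≠ 0 ∨ ε (v (m + 1)) (v m) ≠ 0) →
        (∏ m ∈ Finset.range k,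
          (if ε (v m) (v (m + 1)) ≠ 0 then ε (v m) (v (m + 1))
           else ε (v (m + 1)) (v m))) = 1) :
    ∀ (N : ℕ) (u : Fin n) (w : (G ε).Walk u u), w.length ≤ N → signW ε w = 1 := by
  intro N
  induction N with
  | zero =>
    intro u w hw
    cases w with
    | nil => rfl
    | cons h p => rw [Walk.length_cons] at hw; omega
  | succ N IH =>
    intro u w hw
    cases w with
    | nil => rfl
    | @cons _ v _ h p =>
      rw [Walk.length_cons] at hw
      have hu : u ∈ p.support := p.end_mem_support
      obtain ⟨q, r, hspec, hcount⟩ : ∃ (q : (G ε).Walk v u) (r : (G ε).Walk u u),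
          q.append r = p ∧ q.support.count u = 1 :=
        ⟨p.takeUntil u hu, p.dropUntil u hu, p.take_spec hu,
          p.count_support_takeUntil_eq_one hu⟩
      have hlen : q.length + r.length = p.length := by
        have := congrArg Walk.length hspec
        rwa [Walk.length_append] at this
      have hqpos : 1 ≤ q.length := by
        rcases Nat.eq_zero_or_pos q.length with h0 | h1
        · exact absurd (Walk.eq_of_length_eq_zero h0).symm h.ne
        · exact h1
      have hr1 : signW ε r = 1 := IH u r (by omega)
      have hsplit : signW ε (Walk.cons h p) = signW ε (Walk.cons h q) * signW ε r := by
        rw [← hspec, signW_cons, signW_append, signW_cons, mul_assoc]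
      rw [hsplit, hr1, mul_one]
      have hqlen : q.length ≤ N := by omega
      by_cases hnd : q.support.Nodup
      · have qinj := getVert_injOn_of_nodup q hnd
        rcases Nat.lt_or_ge q.length 2 with hsmall | hbig
        · -- two-cycle u-v-u
          have hq1 : q.length = 1 := by omega
          rw [signW_eq_prod_range, Walk.length_cons, hq1]
          have g0 : (Walk.cons h q).getVert 0 = u := Walk.getVert_zero _
          have g1 : (Walk.cons h q).getVert 1 = v := by
            rw [show (1 : ℕ) = 0 + 1 from rfl, Walk.getVert_cons_succ, Walk.getVert_zero]
          have g2 : (Walk.cons h q).getVert 2 = u := by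
            have hl2 : (Walk.cons h q).length = 2 := by rw [Walk.length_cons, hq1]
            rw [← hl2, Walk.getVert_length]
          rw [Finset.prod_range_succ, Finset.prod_range_succ, Finset.prod_range_zero, one_mul]
          show s ε ((Walk.cons h q).getVert 0) ((Walk.cons h q).getVert 1) *
              s ε ((Walk.cons h q).getVert 1) ((Walk.cons h q).getVert 2) = 1
          rw [g0, g1, g2, s_symm ε hval h2cycle v u h.ne']
          exact s_mul_self ε hval h
        · -- genuine cycle of length ≥ 3
          have hck : (Walk.cons h q).length = q.length + 1 := Walk.length_cons _ _
          have hk3 : 3 ≤ q.length + 1 := by omega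
          have gsucc : ∀ m : ℕ, (Walk.cons h q).getVert (m + 1) = q.getVert m :=
            fun m => Walk.getVert_cons_succ _ _
          have gu : ∀ m, m < q.length → q.getVert m ≠ u := by
            intro m hm e
            have := qinj m (le_of_lt hm) q.length le_rfl (by rw [e, Walk.getVert_length])
            omega
          have hdist : ∀ a < q.length + 1, ∀ b < q.length + 1,
              (Walk.cons h q).getVert a = (Walk.cons h q).getVert b → a = b := by
            intro a ha b hb hab
            match a, b with
            | 0, 0 => rfl
            | 0, b + 1 =>
              exfalso
              rw [Walk.getVert_zero, gsucc] at hab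
              exact gu b (by omega) hab.symm
            | a + 1, 0 =>
              exfalso
              rw [Walk.getVert_zero, gsucc] at hab
              exact gu a (by omega) hab
            | a + 1, b + 1 =>
              rw [gsucc, gsucc] at hab
              have := qinj a (by omega) b (by omega) hab
              omega
          have hclosed : (Walk.cons h q).getVert (q.length + 1) = (Walk.cons h q).getVert 0 := by
            rw [Walk.getVert_zero, ← hck, Walk.getVert_length]
          have hedges : ∀ m < q.length + 1,
              ε ((Walk.cons h q).getVert m) ((Walk.cons h q).getVert (m + 1)) ≠ 0 ∨
                ε ((Walk.cons h q).getVert (m + 1)) ((Walk.cons h q).getVert m) ≠ 0 :=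
            fun m hm => ((Walk.cons h q).adj_getVert_succ (by omega)).2
          have hprod := hcycle (q.length + 1) hk3 (fun m => (Walk.cons h q).getVert m)
            hdist hclosed hedges
          rw [signW_eq_prod_range, hck]
          exact hprod
      · -- a repeated internal vertex: split into two shorter closed walks
        obtain ⟨x, hx2⟩ : ∃ x, 2 ≤ q.support.count x := by
          by_contra hno
          push_neg at hno
          exact hnd (List.nodup_iff_count_le_one.mpr fun a => by have := hno a; omega)
        have hxu : x ≠ u := fun e => by rw [e, hcount] at hx2; omega
        have hxmem : x ∈ q.support := List.count_pos_iff.mp (by omega)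
        obtain ⟨t, f0, hspec2, hcount2⟩ : ∃ (t : (G ε).Walk v x) (f0 : (G ε).Walk x u),
            t.append f0 = q ∧ t.support.count x = 1 :=
          ⟨q.takeUntil x hxmem, q.dropUntil x hxmem, q.take_spec hxmem,
            q.count_support_takeUntil_eq_one hxmem⟩
        obtain ⟨y, h2, d2, hd⟩ := exists_cons_of_ne f0 hxu
        have hxd2 : x ∈ d2.support := by
          have hq : q.support = t.support ++ f0.support.tail := by
            rw [← hspec2, Walk.support_append]
          rw [hq, List.count_append, hcount2] at hx2
          have hmem : x ∈ f0.support.tail := List.count_pos_iff.mp (by omega)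
          rw [hd] at hmem
          simpa [Walk.support_cons] using hmem
        obtain ⟨m, f, hspec3⟩ : ∃ (m : (G ε).Walk y x) (f : (G ε).Walk x u),
            m.append f = d2 :=
          ⟨d2.takeUntil x hxd2, d2.dropUntil x hxd2, d2.take_spec hxd2⟩
        have hlq : t.length + f0.length = q.length := by
          have := congrArg Walk.length hspec2
          rwa [Walk.length_append] at this
        have hlf0 : f0.length = d2.length + 1 := by rw [hd, Walk.length_cons]
        have hld2 : m.length + f.length = d2.length := by
          have := congrArg Walk.length hspec3
          rwa [Walk.length_append] at this
        have hA : signW ε (Walk.cons h2 m) = 1 := by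
          apply IH x
          rw [Walk.length_cons]; omega
        have hB : signW ε ((Walk.cons h t).append f) = 1 := by
          apply IH u
          rw [Walk.length_append, Walk.length_cons]; omega
        rw [signW_cons] at hA
        rw [signW_append, signW_cons] at hB
        have e1 : signW ε (Walk.cons h q) =
            s ε u v * (signW ε t * (s ε x y * (signW ε m * signW ε f))) := by
          rw [signW_cons, ← hspec2, signW_append, hd, signW_cons, ← hspec3, signW_append]
        have e2 : s ε u v * (signW ε t * (s ε x y * (signW ε m * signW ε f))) =
            (s ε x y * signW ε m) * (s ε u v * signW ε t * signW ε f) := by ring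
        rw [e1, e2, hA, hB, one_mul]

end PLP

/-- Positive Loop Property: let `ε` encode the off-diagonal sign pattern of a
sign-stable Jacobian. Form the undirected signed graph with an edge `{i,j}` whenever
`ε i j ≠ 0` or `ε j i ≠ 0`, signed by a nonzero value among `ε i j`, `ε j i`.
If every 2-cycle is positive (`ε i j · ε j i ≥ 0`) and every cycle of length `≥ 3`
has positive sign-product, then there exists `σ ∈ {−1,1}ⁿ` such that
`σ_i σ_j ε i j ≥ 0` for all `i ≠ j`, i.e. `Σ J Σ` is Metzler. -/
theorem positive_loop_property (n : ℕ) (hn : 1 ≤ n) (ε : Fin n → Fin n → ℤ)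
    (hval : ∀ i j, ε i j = -1 ∨ ε i j = 0 ∨ ε i j = 1)
    (h2cycle : ∀ i j, i ≠ j → 0 ≤ ε i j * ε j i)
    (hcycle : ∀ k : ℕ, 3 ≤ k → ∀ v : ℕ → Fin n,
        (∀ a < k, ∀ b < k, v a = v b → a = b) →   -- the vertices are distinct
        v k = v 0 →                                -- the walk is closed
        (∀ m < k, ε (v m) (v (m + 1)) ≠ 0 ∨ ε (v (m + 1)) (v m) ≠ 0) → -- edges exist
        (∏ m ∈ Finset.range k,
          (if ε (v m) (v (m + 1)) ≠ 0 then ε (v m) (v (m + 1))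
           else ε (v (m + 1)) (v m))) = 1) :
    ∃ σ : Fin n → ℤ, (∀ i, σ i = 1 ∨ σ i = -1) ∧
      ∀ i j, i ≠ j → 0 ≤ σ i * σ j * ε i j := by
  classical
  have hclosed := PLP.signW_closed ε hval h2cycle hcycle
  have hindep : ∀ (a b : Fin n) (p q : (PLP.G ε).Walk a b),
      PLP.signW ε p = PLP.signW ε q := by
    intro a b p q
    have h1 : PLP.signW ε (p.append q.reverse) = 1 :=
      hclosed (p.append q.reverse).length a _ le_rfl
    rw [PLP.signW_append, PLP.signW_reverse ε hval h2cycle] at h1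
    have h2 := PLP.signW_mul_self ε hval q
    calc PLP.signW ε p = PLP.signW ε p * (PLP.signW ε q * PLP.signW ε q) := by
          rw [h2, mul_one]
    _ = (PLP.signW ε p * PLP.signW ε q) * PLP.signW ε q := by ring
    _ = PLP.signW ε q := by rw [h1, one_mul]
  -- canonical representative of each connected component
  let S : Fin n → Finset (Fin n) :=
    fun i => Finset.univ.filter (fun j => (PLP.G ε).Reachable j i)
  have hSne : ∀ i, (S i).Nonempty := fun i =>
    ⟨i, by
      simp only [S, Finset.mem_filter, Finset.mem_univ, true_and]
      exact SimpleGraph.Reachable.refl i⟩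
  let rep : Fin n → Fin n := fun i => (S i).min' (hSne i)
  have hrep_reach : ∀ i, (PLP.G ε).Reachable (rep i) i := by
    intro i
    have := (S i).min'_mem (hSne i)
    simpa [S] using this
  have hrep_eq : ∀ i j, (PLP.G ε).Reachable i j → rep i = rep j := by
    intro i j hij
    have hS : S i = S j := by
      ext k
      simp only [S, Finset.mem_filter, Finset.mem_univ, true_and]
      exact ⟨fun hk => hk.trans hij, fun hk => hk.trans hij.symm⟩
    simp only [rep]
    congr 1
  refine ⟨fun i => PLP.signW ε ((hrep_reach i).some), fun i =>
    mul_self_eq_one_iff.mp (PLP.signW_mul_self ε hval _), ?_⟩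
  intro i j hij
  by_cases hz : ε i j = 0
  · rw [hz, mul_zero]
  · have hadj : (PLP.G ε).Adj i j := ⟨hij, Or.inl hz⟩
    have hrr : rep i = rep j := hrep_eq i j hadj.reachable
    have hσj : PLP.signW ε ((hrep_reach j).some) =
        PLP.signW ε ((hrep_reach i).some) * PLP.s ε i j := by
      have := hindep (rep j) j ((hrep_reach j).some)
        ((((hrep_reach i).some).append (SimpleGraph.Walk.cons hadj SimpleGraph.Walk.nil)).copy
          hrr rfl)
      rw [PLP.signW_copy, PLP.signW_append, PLP.signW_cons] at this
      rw [this, PLP.signW_nil, mul_one]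
    have hs : PLP.s ε i j = ε i j := if_pos hz
    have h1 : PLP.signW ε ((hrep_reach i).some) * PLP.signW ε ((hrep_reach i).some) = 1 :=
      PLP.signW_mul_self ε hval _
    have key : PLP.signW ε ((hrep_reach i).some) * PLP.signW ε ((hrep_reach j).some) * ε i j =
        (PLP.signW ε ((hrep_reach i).some) * PLP.signW ε ((hrep_reach i).some)) *
          (ε i j * ε i j) := by
      rw [hσj, hs]; ring
    simp only []
    rw [key, h1, one_mul]
    exact mul_self_nonneg _
end

section
/- (Proposition 1.) Let W ⊆ ℝⁿ be open, let σ ∈ {−1,1}ⁿ with orthant cone C_σ = {u ∈ ℝⁿ : σ_i u_i ≥ 0 for all i}, and let F : W → ℝⁿ be continuously differentiable. Let φ : [0,∞) × W → W be a flow for ẋ = F(x), i.e., φ(0,z) = z, ∂φ/∂t (t,z) = F(φ(t,z)), and z ↦ φ(t,z) is continuously differentiable for each t. Assume the flow is monotone with respect to C_σ (z₁ ≤_σ z₂ implies φ(t,z₁) ≤_σ φ(t,z₂) for all t ≥ 0), and that the Jacobian ∂F/∂x(z) is an irreducible matrix for every z ∈ W. Then the flow has positive derivatives: for every t > 0, z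 ∈ W, and every nonzero v ∈ C_σ, the derivative D_z φ(t, z) applied to v lies in the interior of C_σ (i.e., σ_i (D_z φ(t,z) v)_i > 0 for all i). -/
open Set Metric Filter Real Topology

private lemma mono_right_aux {g g' : ℝ → ℝ} {a b : ℝ} (hab : a ≤ b)
    (hg : ContinuousOn g (Set.Icc a b))
    (hg' : ∀ x ∈ Set.Ico a b, HasDerivWithinAt g (g' x) (Set.Ici x) x)
    (h0 : ∀ x ∈ Set.Ico a b, 0 ≤ g' x) : g a ≤ g b := by
  have := image_le_of_deriv_right_le_deriv_boundary
    (f := fun _ : ℝ => g a) (f' := fun _ : ℝ => (0:ℝ)) (B := g) (B' := g')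
    continuousOn_const (fun x _ => hasDerivWithinAt_const _ _ _) le_rfl hg hg' h0
  exact this (right_mem_Icc.2 hab)

private lemma right_deriv_nonneg {ψ : ℝ → ℝ} {d : ℝ}
    (h : HasDerivWithinAt ψ d (Set.Ici 0) 0)
    (h0 : ψ 0 = 0) (hnn : ∀ᶠ t in 𝓝[>] (0:ℝ), 0 ≤ ψ t) : 0 ≤ d := by
  have hs : Set.Ici (0:ℝ) \ {0} = Set.Ioi 0 := by
    ext x; simp [Set.mem_diff, lt_iff_le_and_ne, eq_comm, and_comm]
  have ht : Tendsto (slope ψ 0) (𝓝[>] (0:ℝ)) (𝓝 d) := by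
    have := (hasDerivWithinAt_iff_tendsto_slope).1 h
    rwa [hs] at this
  refine ge_of_tendsto ht ?_
  filter_upwards [hnn, self_mem_nhdsWithin] with t htnn (htpos : t ∈ Set.Ioi 0)
  rw [slope_def_field, h0, sub_zero, sub_zero]
  exact div_nonneg htnn (le_of_lt htpos)

set_option maxHeartbeats 2000000 in
/-- Proposition 1: if the flow `φ` of `ẋ = F(x)` (with `F` of class `C¹`) is
monotone with respect to the orthant cone `C_σ` and the Jacobian of `F` is
irreducible at every point of the open set `W`, then the flow has positive
derivatives on `W`: for `t > 0`, `z ∈ W` and nonzero `v ∈ C_σ`, the derivative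
`D_z φ(t,z) v` lies in the interior of `C_σ`. -/
theorem monotone_irreducible_implies_positive_derivatives
    (n : ℕ) (σ : Fin n → ℝ) (hσ : ∀ i, σ i = 1 ∨ σ i = -1)
    (W : Set (Fin n → ℝ)) (hWopen : IsOpen W)
    (F : (Fin n → ℝ) → Fin n → ℝ)
    (J : (Fin n → ℝ) → (Fin n → ℝ) →L[ℝ] (Fin n → ℝ))
    (hF : ∀ z ∈ W, HasFDerivAt F (J z) z)
    (hJcont : ContinuousOn J W)
    (φ : ℝ → (Fin n → ℝ) → Fin n → ℝ)
    (hinv : ∀ t ∈ Set.Ici (0 : ℝ), ∀ z ∈ W, φ t z ∈ W)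
    (hφ0 : ∀ z ∈ W, φ 0 z = z)
    (hode : ∀ z ∈ W, ∀ t ∈ Set.Ici (0 : ℝ),
        HasDerivWithinAt (fun τ => φ τ z) (F (φ t z)) (Set.Ici 0) t)
    (Dφ : ℝ → (Fin n → ℝ) → (Fin n → ℝ) →L[ℝ] (Fin n → ℝ))
    (hDφ : ∀ t ∈ Set.Ici (0 : ℝ), ∀ z ∈ W, HasFDerivAt (φ t) (Dφ t z) z)
    (hDφcont : ∀ t ∈ Set.Ici (0 : ℝ), ContinuousOn (Dφ t) W)
    (hmono : ∀ t ∈ Set.Ici (0 : ℝ), ∀ z₁ ∈ W, ∀ z₂ ∈ W,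
        (∀ i, σ i * z₁ i ≤ σ i * z₂ i) → ∀ i, σ i * φ t z₁ i ≤ σ i * φ t z₂ i)
    (hirr : ∀ z ∈ W, ∀ S : Finset (Fin n), S.Nonempty → S ≠ Finset.univ →
        ∃ i ∈ S, ∃ j, j ∉ S ∧ J z (Pi.single j 1) i ≠ 0) :
    ∀ t > (0 : ℝ), ∀ z ∈ W, ∀ v : Fin n → ℝ, v ≠ 0 → (∀ i, 0 ≤ σ i * v i) →
      ∀ i, 0 < σ i * (Dφ t z v) i := by
  classical
  intro T hT z hz v hv0 hvC
  have hTnn : (0:ℝ) ≤ T := le_of_lt hT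
  have hσsq : ∀ i, σ i * σ i = 1 := fun i => by rcases hσ i with h | h <;> rw [h] <;> norm_num
  have hσne : ∀ i, σ i ≠ 0 := fun i => by rcases hσ i with h | h <;> rw [h] <;> norm_num
  -- trajectory continuity
  have hctr : ∀ y ∈ W, ContinuousOn (fun t => φ t y) (Set.Ici (0:ℝ)) := fun y hy t ht =>
    (hode y hy t ht).continuousWithinAt
  -- compact tube
  set K : Set (Fin n → ℝ) := (fun t => φ t z) '' Set.Icc 0 T with hKdef
  have hKcpt : IsCompact K :=
    isCompact_Icc.image_of_continuousOn ((hctr z hz).mono Set.Icc_subset_Ici_self)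
  have hKW : K ⊆ W := by rintro _ ⟨t, ht, rfl⟩; exact hinv t ht.1 z hz
  obtain ⟨ε, hε, hεW⟩ := hKcpt.exists_cthickening_subset_open hWopen hKW
  obtain ⟨L0, hL0⟩ := (hKcpt.cthickening (r := ε)).exists_bound_of_continuousOn
    (hJcont.mono hεW)
  set L := max L0 0 with hLdef
  have hLnn : (0:ℝ) ≤ L := le_max_right _ _
  have hJle : ∀ x ∈ Metric.cthickening ε K, ‖J x‖ ≤ L := fun x hx =>
    le_trans (hL0 x hx) (le_max_left _ _)
  have hballK : ∀ p ∈ K, Metric.ball p ε ⊆ Metric.cthickening ε K := fun p hp =>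
    Metric.ball_subset_closedBall.trans (Metric.closedBall_subset_cthickening hp ε)
  -- cooperativity
  have hcoop : ∀ y ∈ W, ∀ i j : Fin n, i ≠ j →
      0 ≤ σ i * σ j * (J y (Pi.single j 1)) i := by
    intro y hy i j hij
    set e : Fin n → ℝ := σ j • (Pi.single j 1 : Fin n → ℝ) with he
    obtain ⟨ρy, hρy, hballW⟩ := Metric.isOpen_iff.1 hWopen y hy
    have henorm : ‖e‖ = 1 := by
      rw [he, norm_smul, Pi.norm_single, norm_one, mul_one, Real.norm_eq_abs]
      rcases hσ j with h | h <;> rw [h] <;> norm_num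
    have heC : ∀ k, 0 ≤ σ k * e k := by
      intro k
      by_cases hk : k = j
      · subst hk
        simp only [he, Pi.smul_apply, smul_eq_mul, Pi.single_eq_same, mul_one]
        nlinarith [hσsq k]
      · simp [he, Pi.single_eq_of_ne hk]
    have hei : e i = 0 := by simp [he, Pi.single_eq_of_ne hij]
    -- for each small s, the directional difference of F is σ-nonneg in component i
    have key : ∀ᶠ s in 𝓝[>] (0:ℝ), 0 ≤ σ i * (F (y + s • e) i - F y i) := by
      filter_upwards [Ioo_mem_nhdsGT_of_mem (Set.left_mem_Ico.2 hρy),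
        self_mem_nhdsWithin] with s hsρ (hs : (0:ℝ) < s)
      have hyW' : y + s • e ∈ W := by
        apply hballW
        rw [Metric.mem_ball, dist_eq_norm, add_sub_cancel_left, norm_smul, henorm,
          Real.norm_eq_abs, abs_of_pos hs, mul_one]
        exact hsρ.2
      have hyle : ∀ k, σ k * y k ≤ σ k * (y + s • e) k := by
        intro k
        have := heC k
        simp only [Pi.add_apply, Pi.smul_apply, smul_eq_mul, mul_add]
        nlinarith
      set ψ : ℝ → ℝ := fun t => σ i * (φ t (y + s • e) i - φ t y i) with hψ
      have hψ0 : ψ 0 = 0 := by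
        simp [hψ, hφ0 y hy, hφ0 _ hyW', Pi.add_apply, Pi.smul_apply, smul_eq_mul, hei]
      have hψnn : ∀ᶠ t in 𝓝[>] (0:ℝ), 0 ≤ ψ t := by
        filter_upwards [self_mem_nhdsWithin] with t (ht : (0:ℝ) < t)
        have := hmono t ht.le y hy (y + s • e) hyW' hyle i
        simp only [hψ]; nlinarith
      have hψd : HasDerivWithinAt ψ (σ i * (F (y + s • e) i - F y i)) (Set.Ici 0) 0 := by
        have h1 : HasDerivWithinAt (fun t => φ t (y + s • e) i) (F (y + s • e) i)
            (Set.Ici 0) 0 := by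
          have := (ContinuousLinearMap.proj (R := ℝ) (φ := fun _ : Fin n => ℝ)
            i).hasFDerivAt.comp_hasDerivWithinAt 0
            (hode (y + s • e) hyW' 0 (Set.mem_Ici.mpr le_rfl))
          simpa [hφ0 _ hyW', Function.comp_def] using this
        have h2 : HasDerivWithinAt (fun t => φ t y i) (F y i) (Set.Ici 0) 0 := by
          have := (ContinuousLinearMap.proj (R := ℝ) (φ := fun _ : Fin n => ℝ)
            i).hasFDerivAt.comp_hasDerivWithinAt 0
            (hode y hy 0 (Set.mem_Ici.mpr le_rfl))
          simpa [hφ0 y hy, Function.comp_def] using this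
        exact ((h1.sub h2).const_mul (σ i))
      exact right_deriv_nonneg hψd hψ0 hψnn
    -- now take the derivative in s
    have hd : HasDerivAt (fun s : ℝ => σ i * (F (y + s • e) i - F y i))
        (σ i * (J y e) i) 0 := by
      have hline : HasDerivAt (fun s : ℝ => y + s • e) e 0 := by
        simpa using ((hasDerivAt_id (0:ℝ)).smul_const e).const_add y
      have hF' : HasFDerivAt F (J y) ((fun s : ℝ => y + s • e) 0) := by
        simpa using hF y hy
      have h1 : HasDerivAt (fun s : ℝ => F (y + s • e)) (J y e) 0 :=
        hF'.comp_hasDerivAt 0 hline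
      have h2 := (ContinuousLinearMap.proj (R := ℝ) (φ := fun _ : Fin n => ℝ)
        i).hasFDerivAt.comp_hasDerivAt 0 h1
      exact ((h2.sub_const (F y i)).const_mul (σ i))
    have h0 : 0 ≤ σ i * (J y e) i := by
      refine right_deriv_nonneg hd.hasDerivWithinAt (by simp) key
    have : (J y e) i = σ j * (J y (Pi.single j 1)) i := by
      rw [he, map_smul]; simp
    rw [this] at h0; nlinarith [h0]
  -- Kamke inequality on balls
  have hKamke : ∀ (p : Fin n → ℝ) (ρ : ℝ), Metric.ball p ρ ⊆ W →
      ∀ i : Fin n, ∀ ψc : Fin n → ℝ,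
      (∀ y ∈ Metric.ball p ρ, ∀ k, ψc k ≤ σ i * σ k * (J y (Pi.single k 1)) i) →
      ∀ a b : Fin n → ℝ, a ∈ Metric.ball p ρ → b ∈ Metric.ball p ρ →
      (∀ k, σ k * a k ≤ σ k * b k) →
      (∑ k, ψc k * (σ k * (b k - a k))) ≤ σ i * F b i - σ i * F a i := by
    intro p ρ hρW i ψc hψc a b ha hb hab
    set ℓ : ℝ → (Fin n → ℝ) := fun θ => a + θ • (b - a) with hℓ
    have hmem : ∀ θ ∈ Set.Icc (0:ℝ) 1, ℓ θ ∈ Metric.ball p ρ := by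
      intro θ hθ
      have h1 : ℓ θ = (1 - θ) • a + θ • b := by
        simp only [hℓ]; ext k; simp [smul_sub]; ring
      rw [h1]
      exact (convex_ball p ρ) ha hb (by linarith [hθ.2]) hθ.1 (by ring)
    -- decomposition of the directional derivative
    have hdec : ∀ y ∈ Metric.ball p ρ,
        σ i * (J y (b - a)) i = ∑ k, (σ i * σ k * (J y (Pi.single k 1)) i) * (σ k * (b k - a k)) := by
      intro y _
      have hba : (b - a) = ∑ k, (b k - a k) • (Pi.single k 1 : Fin n → ℝ) := by
        have h2 : ∀ k, (Pi.single k ((b-a) k) : Fin n → ℝ) = (b k - a k) • (Pi.single k 1 : Fin n → ℝ) := by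
          intro k
          rw [← Pi.single_smul]
          simp [Pi.sub_apply]
      
        rw [← Finset.univ_sum_single (b - a)]
        exact Finset.sum_congr rfl fun k _ => h2 k
      rw [hba, map_sum]
      simp only [map_smul]
      rw [Finset.sum_apply, Finset.mul_sum]
      refine Finset.sum_congr rfl fun k _ => ?_
      have := hσsq k
      simp only [Pi.smul_apply, smul_eq_mul]
      linear_combination (-(σ i * (J y (Pi.single k 1)) i * (b k - a k))) * (hσsq k)
    have hunn : ∀ k, 0 ≤ σ k * (b k - a k) := fun k => by nlinarith [hab k]
    set Sm : ℝ := ∑ k, ψc k * (σ k * (b k - a k)) with hSm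
    set G : ℝ → ℝ := fun θ => σ i * F (ℓ θ) i - θ * Sm with hG
    have hG' : ∀ θ ∈ Set.Icc (0:ℝ) 1,
        HasDerivAt G (σ i * (J (ℓ θ) (b - a)) i - Sm) θ := by
      intro θ hθ
      have hline : HasDerivAt ℓ (b - a) θ := by
        simpa [hℓ] using ((hasDerivAt_id θ).smul_const (b - a)).const_add a
      have hF' : HasFDerivAt F (J (ℓ θ)) (ℓ θ) := hF _ (hρW (hmem θ hθ))
      have h1 : HasDerivAt (fun θ => F (ℓ θ)) (J (ℓ θ) (b - a)) θ :=
        hF'.comp_hasDerivAt θ hline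
      have h2 := (ContinuousLinearMap.proj (R := ℝ) (φ := fun _ : Fin n => ℝ)
        i).hasFDerivAt.comp_hasDerivAt θ h1
      exact (h2.const_mul (σ i)).sub (by simpa using (hasDerivAt_id θ).mul_const Sm)
    have hGmono : G 0 ≤ G 1 := by
      refine mono_right_aux zero_le_one
        (fun θ hθ => ((hG' θ hθ).continuousAt.continuousWithinAt)) 
        (fun θ hθ => (hG' θ (Set.Ico_subset_Icc_self hθ)).hasDerivWithinAt)
        (fun θ hθ => ?_)
      · have hθ' := Set.Ico_subset_Icc_self hθ
        rw [sub_nonneg, hdec _ (hmem θ hθ'), hSm]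
        refine Finset.sum_le_sum fun k _ => ?_
        exact mul_le_mul_of_nonneg_right (hψc _ (hmem θ hθ') k) (hunn k)
    have hℓ0 : ℓ 0 = a := by simp [hℓ]
    have hℓ1 : ℓ 1 = b := by simp only [hℓ]; ext k; simp
    simp only [hG, hℓ0, hℓ1, zero_mul, sub_zero, one_mul] at hGmono
    linarith
  -- positive direction component
  obtain ⟨k₀, hk₀⟩ : ∃ k, v k ≠ 0 := Function.ne_iff.1 hv0
  have hk₀pos : 0 < σ k₀ * v k₀ :=
    lt_of_le_of_ne (hvC k₀) (Ne.symm (mul_ne_zero (hσne k₀) hk₀))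
  have hvn : (0:ℝ) < ‖v‖ := norm_pos_iff.2 hv0
  set C : ℝ := ‖v‖ * Real.exp (L * T) with hCdef
  have hCpos : 0 < C := mul_pos hvn (Real.exp_pos _)
  set M : ℝ → ℝ := fun s => s * C with hMdef
  have hMev : ∀ β : ℝ, 0 < β → ∀ᶠ s in 𝓝[>] (0:ℝ), M s < β := by
    intro β hβ
    filter_upwards [Ioo_mem_nhdsGT_of_mem (Set.left_mem_Ico.2 (div_pos hβ hCpos))]
      with s hs
    have : s * C < (β / C) * C := by
      exact mul_lt_mul_of_pos_right hs.2 hCpos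
    rwa [div_mul_cancel₀ _ (ne_of_gt hCpos)] at this
  have hzK : z ∈ K := ⟨0, ⟨le_rfl, hTnn⟩, hφ0 z hz⟩
  have hsv_le : ∀ s : ℝ, 0 < s → ‖s • v‖ ≤ M s := by
    intro s hs
    have h1 : (1:ℝ) ≤ Real.exp (L * T) := Real.one_le_exp (mul_nonneg hLnn hTnn)
    rw [norm_smul, Real.norm_eq_abs, abs_of_pos hs]
    show s * ‖v‖ ≤ s * (‖v‖ * Real.exp (L * T))
    nlinarith [mul_nonneg (mul_nonneg hs.le (norm_nonneg v)) (sub_nonneg.2 h1)]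
  have hzW' : ∀ s : ℝ, 0 < s → M s < ε → z + s • v ∈ W := by
    intro s hs hsε
    apply hεW; apply hballK z hzK
    rw [Metric.mem_ball, dist_eq_norm, add_sub_cancel_left]
    exact lt_of_le_of_lt (hsv_le s hs) hsε
  have hzle : ∀ s : ℝ, 0 < s → ∀ k, σ k * z k ≤ σ k * (z + s • v) k := by
    intro s hs k
    have := hvC k
    simp only [Pi.add_apply, Pi.smul_apply, smul_eq_mul, mul_add]
    nlinarith
  -- Step B: uniform closeness
  have hB : ∀ s : ℝ, 0 < s → M s < ε → ∀ t ∈ Set.Icc 0 T,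
      ‖φ t (z + s • v) - φ t z‖ ≤ M s := by
    intro s hs hsε
    set y := z + s • v with hy
    have hyW : y ∈ W := hzW' s hs hsε
    set f : ℝ → (Fin n → ℝ) := fun t => φ t y - φ t z with hf
    have hfc : ContinuousOn f (Set.Ici 0) := (hctr y hyW).sub (hctr z hz)
    have hf0 : ‖f 0‖ ≤ s * ‖v‖ := by
      simp only [hf, hφ0 y hyW, hφ0 z hz, hy, add_sub_cancel_left, norm_smul,
        Real.norm_eq_abs, abs_of_pos hs]
      rw [hφ0 (z + s • v) hyW, add_sub_cancel_left, norm_smul, Real.norm_eq_abs, abs_of_pos hs]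
    have hf0M : ‖f 0‖ ≤ M s := le_trans hf0 (by
      simpa [norm_smul, Real.norm_eq_abs, abs_of_pos hs] using hsv_le s hs)
    -- Lipschitz estimate inside the tube
    have hlip : ∀ x ∈ Set.Icc 0 T, ‖f x‖ ≤ ε → ‖F (φ x y) - F (φ x z)‖ ≤ L * ‖f x‖ := by
      intro x hx hfx
      have haK : φ x z ∈ K := ⟨x, hx, rfl⟩
      have hsub : Metric.closedBall (φ x z) ε ⊆ Metric.cthickening ε K :=
        Metric.closedBall_subset_cthickening haK ε
      have := (convex_closedBall (φ x z) ε).norm_image_sub_le_of_norm_hasFDerivWithin_le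
        (fun w hw => (hF w (hεW (hsub hw))).hasFDerivWithinAt)
        (fun w hw => hJle w (hsub hw))
        (Metric.mem_closedBall_self hε.le)
        (Metric.mem_closedBall.2 (by rw [dist_eq_norm]; exact hfx))
      simpa [hf] using this
    -- Gronwall, conditionally on staying in the tube
    have growth : ∀ t ∈ Set.Icc 0 T, (∀ τ ∈ Set.Icc 0 t, ‖f τ‖ ≤ ε) →
        ∀ τ ∈ Set.Icc 0 t, ‖f τ‖ ≤ s * ‖v‖ * Real.exp (L * τ) := by
      intro t ht htube
      have hder : ∀ x ∈ Set.Ico (0:ℝ) t, HasDerivWithinAt f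
          (F (φ x y) - F (φ x z)) (Set.Ici x) x := by
        intro x hx
        exact ((hode y hyW x hx.1).sub (hode z hz x hx.1)).mono
          (Set.Ici_subset_Ici.2 hx.1)
      have hbound : ∀ x ∈ Set.Ico (0:ℝ) t, ‖F (φ x y) - F (φ x z)‖ ≤ L * ‖f x‖ + 0 := by
        intro x hx
        rw [add_zero]
        exact hlip x ⟨hx.1, le_trans hx.2.le ht.2⟩ (htube x ⟨hx.1, hx.2.le⟩)
      intro τ hτ
      have := norm_le_gronwallBound_of_norm_deriv_right_le
        (hfc.mono Set.Icc_subset_Ici_self) hder hf0 hbound τ hτ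
      rwa [gronwallBound_ε0, sub_zero] at this
    have hMτ : ∀ τ ∈ Set.Icc 0 T, s * ‖v‖ * Real.exp (L * τ) ≤ M s := by
      intro τ hτ
      show s * ‖v‖ * Real.exp (L * τ) ≤ s * (‖v‖ * Real.exp (L * T))
      have := Real.exp_le_exp.2 (mul_le_mul_of_nonneg_left hτ.2 hLnn)
      nlinarith [mul_nonneg hs.le (norm_nonneg v), Real.exp_pos (L * τ)]
    -- bootstrap: the tube condition holds on all of [0,T]
    have htube : ∀ t ∈ Set.Icc 0 T, ‖f t‖ ≤ ε := by
      by_contra hcon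
      push_neg at hcon
      obtain ⟨t₁, ht₁, h1⟩ := hcon
      set Bs : Set ℝ := {t | t ∈ Set.Icc 0 T ∧ ε ≤ ‖f t‖} with hBs
      have hBclosed : IsClosed Bs := by
        have : Bs = Set.Icc 0 T ∩ f ⁻¹' {w | ε ≤ ‖w‖} := rfl
        rw [this]
        exact ContinuousOn.preimage_isClosed_of_isClosed
          (hfc.mono Set.Icc_subset_Ici_self) isClosed_Icc
          (isClosed_le continuous_const continuous_norm)
      have hBne : Bs.Nonempty := ⟨t₁, ht₁, h1.le⟩
      have hBbdd : BddBelow Bs := ⟨0, fun x hx => hx.1.1⟩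
      set c := sInf Bs with hcdef
      have hcB : c ∈ Bs := hBclosed.csInf_mem hBne hBbdd
      have hcpos : 0 < c := by
        rcases lt_or_eq_of_le hcB.1.1 with h | h
        · exact h
        · exfalso
          have h2 := hcB.2
          rw [← h] at h2
          linarith [le_trans h2 hf0M]
      have hlt : ∀ τ, 0 ≤ τ → τ < c → ‖f τ‖ < ε := by
        intro τ h0 hτ
        by_contra h
        push_neg at h
        exact absurd (csInf_le hBbdd ⟨⟨h0, le_trans hτ.le hcB.1.2⟩, h⟩) (not_le.2 hτ)
      have hgr : ∀ τ, 0 ≤ τ → τ < c → ‖f τ‖ ≤ M s := by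
        intro τ h0 hτ
        have hτT : τ ∈ Set.Icc 0 T := ⟨h0, le_trans hτ.le hcB.1.2⟩
        have := growth τ hτT
          (fun τ' hτ' => (hlt τ' hτ'.1 (lt_of_le_of_lt hτ'.2 hτ)).le) τ ⟨h0, le_rfl⟩
        exact le_trans this (hMτ τ hτT)
      have hlim : ‖f c‖ ≤ M s := by
        have hcont : ContinuousWithinAt (fun τ => ‖f τ‖) (Set.Ioo 0 c) c := by
          refine ContinuousWithinAt.mono ?_ (fun x (hx : x ∈ Set.Ioo 0 c) => le_of_lt hx.1)
          exact (continuous_norm.comp_continuousOn hfc) c (le_of_lt hcpos)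
        haveI : (𝓝[Set.Ioo (0:ℝ) c] c).NeBot := right_nhdsWithin_Ioo_neBot hcpos
        refine le_of_tendsto hcont ?_
        filter_upwards [self_mem_nhdsWithin] with τ hτ
        exact hgr τ hτ.1.le hτ.2
      exact absurd hcB.2 (not_le.2 (lt_of_le_of_lt hlim hsε))
    intro t ht
    exact le_trans (growth T ⟨hTnn, le_rfl⟩ htube t ht) (hMτ t ht)
  -- Step C1 : finite-difference Gronwall lower bound
  have hC1 : ∀ s : ℝ, 0 < s → M s < ε → ∀ i : Fin n,
      ∀ t₁ ∈ Set.Icc 0 T, ∀ t₂ ∈ Set.Icc 0 T, t₁ ≤ t₂ →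
      Real.exp (L*t₁) * (σ i * (φ t₁ (z + s • v) i - φ t₁ z i)) ≤
        Real.exp (L*t₂) * (σ i * (φ t₂ (z + s • v) i - φ t₂ z i)) := by
    intro s hs hsε i t₁ h₁ t₂ h₂ h12
    set y := z + s • v with hy
    have hyW : y ∈ W := hzW' s hs hsε
    set u : ℝ → ℝ := fun t => σ i * (φ t y i - φ t z i) with hu
    have hucont : ContinuousOn u (Set.Ici 0) := by
      exact (((continuous_apply i).comp_continuousOn
        ((hctr y hyW).sub (hctr z hz)))).const_smul (σ i)
    have hud : ∀ x ∈ Set.Ici (0:ℝ), HasDerivWithinAt u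
        (σ i * (F (φ x y) i - F (φ x z) i)) (Set.Ici x) x := by
      intro x hx
      have h1 := (ContinuousLinearMap.proj (R := ℝ) (φ := fun _ : Fin n => ℝ)
        i).hasFDerivAt.comp_hasDerivWithinAt x (hode y hyW x hx)
      have h2 := (ContinuousLinearMap.proj (R := ℝ) (φ := fun _ : Fin n => ℝ)
        i).hasFDerivAt.comp_hasDerivWithinAt x (hode z hz x hx)
      exact (((h1.sub h2).const_mul (σ i)).mono (Set.Ici_subset_Ici.2 hx))
    set G : ℝ → ℝ := fun t => Real.exp (L*t) * u t with hG
    have key : G t₁ ≤ G t₂ := by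
      refine mono_right_aux (g' := fun x => Real.exp (L*x) * L * u x +
        Real.exp (L*x) * (σ i * (F (φ x y) i - F (φ x z) i))) h12 ?_ ?_ ?_
      · refine ContinuousOn.mul ?_ (hucont.mono ?_)
        · exact (Real.continuous_exp.comp (continuous_const.mul continuous_id)).continuousOn
        · exact fun x hx => le_trans h₁.1 hx.1
      · intro x hx
        have hx0 : x ∈ Set.Ici (0:ℝ) := le_trans h₁.1 hx.1
        have hexp : HasDerivAt (fun t => Real.exp (L*t)) (Real.exp (L*x) * L) x := by
          simpa using (((hasDerivAt_id x).const_mul L).exp)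
        exact (hexp.hasDerivWithinAt.mul (hud x hx0))
      · intro x hx
        have hx0 : x ∈ Set.Ici (0:ℝ) := le_trans h₁.1 hx.1
        have hxT : x ∈ Set.Icc 0 T := ⟨hx0, le_trans hx.2.le h₂.2⟩
        have haK : φ x z ∈ K := ⟨x, hxT, rfl⟩
        have hballsub : Metric.ball (φ x z) ε ⊆ W := (hballK _ haK).trans hεW
        have hbmem : φ x y ∈ Metric.ball (φ x z) ε := by
          rw [Metric.mem_ball, dist_eq_norm]
          exact lt_of_le_of_lt (hB s hs hsε x hxT) hsε
        have hflowle : ∀ k, σ k * φ x z k ≤ σ k * φ x y k :=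
          hmono x hx0 z hz y hyW (hzle s hs)
        set ψc : Fin n → ℝ := fun k => if k = i then -L else 0 with hψc
        have hψch : ∀ w ∈ Metric.ball (φ x z) ε, ∀ k,
            ψc k ≤ σ i * σ k * (J w (Pi.single k 1)) i := by
          intro w hw k
          by_cases hk : k = i
          · subst hk
            simp only [hψc, if_pos rfl]
            have h3 : |(J w (Pi.single k 1)) k| ≤ L := by
              have e1 : ‖(Pi.single k (1:ℝ) : Fin n → ℝ)‖ = 1 := by
                rw [Pi.norm_single, norm_one]
              have e2 := (J w).le_opNorm (Pi.single k 1)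
              rw [e1, mul_one] at e2
              have e3 : |(J w (Pi.single k 1)) k| ≤ ‖J w (Pi.single k 1)‖ := by
                rw [← Real.norm_eq_abs]; exact norm_le_pi_norm _ k
              exact le_trans e3 (le_trans e2 (hJle w (hballK _ haK hw)))
            have h4 := abs_le.1 h3
            calc -L ≤ (J w (Pi.single k 1)) k := by linarith [h4.1]
            _ = σ k * σ k * (J w (Pi.single k 1)) k := by rw [hσsq k]; ring
          · simp only [hψc, if_neg hk]
            exact hcoop w (hballsub hw) i k (fun h => hk h.symm)
        have hKam := hKamke (φ x z) ε hballsub i ψc hψch (φ x z) (φ x y)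
          (Metric.mem_ball_self hε) hbmem hflowle
        have hsum : (∑ k, ψc k * (σ k * (φ x y k - φ x z k))) =
            -L * (σ i * (φ x y i - φ x z i)) := by
          rw [Finset.sum_eq_single i]
          · simp only [hψc, if_pos rfl]
          · intro k _ hk; simp [hψc, if_neg hk]
          · intro h; exact absurd (Finset.mem_univ i) h
        rw [hsum] at hKam
        have humono : 0 ≤ u x := by
          have := hflowle i
          simp only [hu]; nlinarith
        have hexpos := Real.exp_pos (L*x)
        -- goal : 0 ≤ exp(Lx)*L*u x + exp(Lx) * u'(x)
        have : -(L * u x) ≤ σ i * (F (φ x y) i - F (φ x z) i) := by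
          simp only [hu]; nlinarith [hKam]
        show 0 ≤ Real.exp (L*x) * L * u x +
          Real.exp (L*x) * (σ i * (F (φ x y) i - F (φ x z) i))
        nlinarith [mul_le_mul_of_nonneg_left this hexpos.le]
    exact key
  -- slope limits
  have hslope : ∀ t ∈ Set.Icc 0 T, ∀ i : Fin n,
      Filter.Tendsto (fun s : ℝ => σ i * ((φ t (z + s • v) i - φ t z i) / s)) (𝓝[>] (0:ℝ))
        (𝓝 (σ i * (Dφ t z v) i)) := by
    intro t ht i
    have hline : HasDerivAt (fun s : ℝ => z + s • v) v 0 := by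
      simpa using ((hasDerivAt_id (0:ℝ)).smul_const v).const_add z
    have hF' : HasFDerivAt (φ t) (Dφ t z) ((fun s : ℝ => z + s • v) 0) := by
      simpa using hDφ t ht.1 z hz
    have h1 : HasDerivAt (fun s : ℝ => φ t (z + s • v)) (Dφ t z v) 0 :=
      hF'.comp_hasDerivAt 0 hline
    have h2 : HasDerivAt (fun s : ℝ => φ t (z + s • v) i) ((Dφ t z v) i) 0 :=
      (ContinuousLinearMap.proj (R := ℝ) (φ := fun _ : Fin n => ℝ)
        i).hasFDerivAt.comp_hasDerivAt 0 h1
    have h3 := hasDerivAt_iff_tendsto_slope.1 h2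
    have h4 : Filter.Tendsto (slope (fun s : ℝ => φ t (z + s • v) i) 0) (𝓝[>] (0:ℝ))
        (𝓝 ((Dφ t z v) i)) := h3.mono_left (nhdsWithin_mono 0 fun x hx => ne_of_gt hx)
    have h5 : ∀ s : ℝ, slope (fun s : ℝ => φ t (z + s • v) i) 0 s =
        (φ t (z + s • v) i - φ t z i) / s := by
      intro s
      rw [slope_def_field]
      simp
    rw [show (fun s : ℝ => σ i * ((φ t (z + s • v) i - φ t z i) / s)) =
        (fun s : ℝ => σ i * (slope (fun s : ℝ => φ t (z + s • v) i) 0 s)) from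
        funext fun s => by rw [h5]]
    exact h4.const_mul (σ i)
  -- D0 : nonnegativity in the limit
  have hD0 : ∀ t ∈ Set.Icc 0 T, ∀ i : Fin n, 0 ≤ σ i * (Dφ t z v) i := by
    intro t ht i
    refine ge_of_tendsto (hslope t ht i) ?_
    filter_upwards [hMev ε hε, self_mem_nhdsWithin] with s hsε (hs : (0:ℝ) < s)
    have h1 := hmono t ht.1 z hz (z + s • v) (hzW' s hs hsε) (hzle s hs) i
    have h2 : 0 ≤ σ i * (φ t (z + s • v) i - φ t z i) := by nlinarith
    rw [mul_div_assoc'] at *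
    exact div_nonneg h2 hs.le
  -- D1 : Gronwall lower bound in the limit
  have hD1 : ∀ i : Fin n, ∀ t₁ ∈ Set.Icc 0 T, ∀ t₂ ∈ Set.Icc 0 T, t₁ ≤ t₂ →
      Real.exp (L*t₁) * (σ i * (Dφ t₁ z v) i) ≤ Real.exp (L*t₂) * (σ i * (Dφ t₂ z v) i) := by
    intro i t₁ h₁ t₂ h₂ h12
    refine le_of_tendsto_of_tendsto
      (((hslope t₁ h₁ i).const_mul (Real.exp (L*t₁))))
      (((hslope t₂ h₂ i).const_mul (Real.exp (L*t₂)))) ?_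
    filter_upwards [hMev ε hε, self_mem_nhdsWithin] with s hsε (hs : (0:ℝ) < s)
    have hle := hC1 s hs hsε i t₁ h₁ t₂ h₂ h12
    have e : ∀ c a : ℝ, c * (σ i * (a / s)) = (c * (σ i * a)) / s := fun c a => by ring
    show Real.exp (L*t₁) * (σ i * ((φ t₁ (z + s • v) i - φ t₁ z i) / s)) ≤
      Real.exp (L*t₂) * (σ i * ((φ t₂ (z + s • v) i - φ t₂ z i) / s))
    rw [e, e]
    exact div_le_div_of_nonneg_right hle hs.le
  -- initial derivative is the identity
  have hw0 : Dφ 0 z v = v := by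
    have h1 : HasFDerivAt (φ 0) (Dφ 0 z) z := hDφ 0 (Set.mem_Ici.mpr le_rfl) z hz
    have h2 : HasFDerivAt (φ 0) (ContinuousLinearMap.id ℝ (Fin n → ℝ)) z := by
      refine (hasFDerivAt_id z).congr_of_eventuallyEq ?_
      filter_upwards [hWopen.mem_nhds hz] with x hx
      exact hφ0 x hx
    rw [h1.unique h2]; rfl
  -- the zero set of the derivative
  set Zs : ℝ → Finset (Fin n) :=
    fun t => Finset.univ.filter (fun i => σ i * (Dφ t z v) i ≤ 0) with hZsdef
  have hZmem : ∀ (t : ℝ) (i : Fin n), i ∈ Zs t ↔ σ i * (Dφ t z v) i ≤ 0 := by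
    intro t i; simp [hZsdef]
  have hZdec : ∀ t₁ ∈ Set.Icc 0 T, ∀ t₂ ∈ Set.Icc 0 T, t₁ ≤ t₂ → Zs t₂ ⊆ Zs t₁ := by
    intro t₁ h₁ t₂ h₂ h12 i hi
    rw [hZmem] at hi ⊢
    have h3 := hD1 i t₁ h₁ t₂ h₂ h12
    nlinarith [Real.exp_pos (L*t₁), Real.exp_pos (L*t₂), hD0 t₁ h₁ i,
      mul_nonpos_of_nonneg_of_nonpos (Real.exp_pos (L*t₂)).le hi]
  have hk₀Z : ∀ t ∈ Set.Icc 0 T, k₀ ∉ Zs t := by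
    intro t ht hk
    rw [hZmem] at hk
    have h3 := hD1 k₀ 0 ⟨le_rfl, hTnn⟩ t ht ht.1
    rw [hw0] at h3
    nlinarith [Real.exp_pos (L*0), Real.exp_pos (L*t), hk₀pos,
      mul_nonpos_of_nonneg_of_nonpos (Real.exp_pos (L*t)).le hk,
      mul_pos (Real.exp_pos (L*0)) hk₀pos]
  -- suppose some component is not strictly positive at time T
  intro i₁
  by_contra hcon
  push_neg at hcon
  have hiT : i₁ ∈ Zs T := (hZmem T i₁).2 hcon
  -- time of minimal cardinality
  set cs : Set ℕ := (fun t => (Zs t).card) '' Set.Ioo 0 T with hcs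
  have hcsne : cs.Nonempty := ⟨(Zs (T/2)).card, ⟨T/2, ⟨half_pos hT, half_lt_self hT⟩, rfl⟩⟩
  obtain ⟨t', ht', hc⟩ := Nat.sInf_mem hcsne
  have hc' : (Zs t').card = sInf cs := hc
  have ht'Icc : t' ∈ Set.Icc 0 T := ⟨ht'.1.le, ht'.2.le⟩
  have hconst : ∀ t ∈ Set.Ioo 0 T, t' ≤ t → Zs t = Zs t' := by
    intro t ht htt
    refine Finset.eq_of_subset_of_card_le
      (hZdec t' ht'Icc t ⟨ht.1.le, ht.2.le⟩ htt) ?_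
    rw [hc']
    exact Nat.sInf_le ⟨t, ht, rfl⟩
  have hSne : (Zs t').Nonempty := ⟨i₁, hZdec t' ht'Icc T ⟨hTnn, le_rfl⟩ ht'.2.le hiT⟩
  have hSnuniv : Zs t' ≠ Finset.univ := by
    intro h
    exact hk₀Z t' ht'Icc (h ▸ Finset.mem_univ k₀)
  have hyW : φ t' z ∈ W := hinv t' ht'.1.le z hz
  obtain ⟨i, hiS, j, hjS, hJne⟩ := hirr (φ t' z) hyW (Zs t') hSne hSnuniv
  have hij : i ≠ j := fun h => hjS (h ▸ hiS)
  set δ2 : ℝ := σ i * σ j * (J (φ t' z) (Pi.single j 1)) i with hδ2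
  have hδ2pos : 0 < δ2 := by
    rcases lt_or_eq_of_le (hcoop _ hyW i j hij) with h | h
    · exact h
    · exact absurd h.symm (mul_ne_zero (mul_ne_zero (hσne i) (hσne j)) hJne)
  set δ : ℝ := δ2 / 2 with hδ
  have hδpos : 0 < δ := half_pos hδ2pos
  -- neighborhood where the coupling coefficient is at least δ
  have hJapp : ContinuousOn (fun x => σ i * σ j * (J x (Pi.single j 1)) i) W := by
    have h1 : ContinuousOn (fun x => J x (Pi.single j 1)) W :=
      hJcont.clm_apply continuousOn_const
    exact continuousOn_const.mul ((continuous_apply i).comp_continuousOn h1)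
  have hcontat : ContinuousAt (fun x => σ i * σ j * (J x (Pi.single j 1)) i) (φ t' z) :=
    hJapp.continuousAt (hWopen.mem_nhds hyW)
  have hev : ∀ᶠ x in 𝓝 (φ t' z), δ < σ i * σ j * (J x (Pi.single j 1)) i :=
    hcontat.eventually (lt_mem_nhds (show δ < δ2 by simpa [hδ] using half_lt_self hδ2pos))
  obtain ⟨ρ₁, hρ₁, hρball⟩ := Metric.eventually_nhds_iff_ball.1 hev
  set ρ := min ρ₁ ε with hρdef
  have hρpos : 0 < ρ := lt_min hρ₁ hε
  have ht'K : φ t' z ∈ K := ⟨t', ht'Icc, rfl⟩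
  have hρsub : Metric.ball (φ t' z) ρ ⊆ Metric.ball (φ t' z) ε :=
    Metric.ball_subset_ball (min_le_right _ _)
  have hρW : Metric.ball (φ t' z) ρ ⊆ W := fun x hx => hεW (hballK _ ht'K (hρsub hx))
  have hρJ : ∀ x ∈ Metric.ball (φ t' z) ρ, ‖J x‖ ≤ L :=
    fun x hx => hJle x (hballK _ ht'K (hρsub hx))
  have hρδ : ∀ x ∈ Metric.ball (φ t' z) ρ, δ ≤ σ i * σ j * (J x (Pi.single j 1)) i :=
    fun x hx => (hρball x (lt_of_lt_of_le (Metric.mem_ball.1 hx) (min_le_left _ _))).le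
  -- choose d slightly to the right of t'
  have hflow : ContinuousWithinAt (fun t => φ t z) (Set.Ici 0) t' := hctr z hz t' ht'.1.le
  have hev2 : ∀ᶠ t in 𝓝[Set.Ici 0] t', dist (φ t z) (φ t' z) < ρ/2 :=
    hflow (Metric.ball_mem_nhds _ (half_pos hρpos))
  obtain ⟨η, hη, hηball⟩ := Metric.mem_nhdsWithin_iff.1 hev2
  set d : ℝ := min (t' + η/2) ((t' + T)/2) with hd
  have hd1 : t' < d := lt_min (by linarith) (by linarith [ht'.2])
  have hd2 : d < T := lt_of_le_of_lt (min_le_right _ _) (by linarith [ht'.2])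
  have hdIcc : d ∈ Set.Icc 0 T := ⟨le_trans ht'.1.le hd1.le, hd2.le⟩
  have hdIoo : d ∈ Set.Ioo 0 T := ⟨lt_trans ht'.1 hd1, hd2⟩
  have hdflow : ∀ x ∈ Set.Icc t' d, dist (φ x z) (φ t' z) < ρ/2 := by
    intro x hx
    refine hηball ⟨?_, le_trans ht'.1.le hx.1⟩
    rw [Metric.mem_ball, Real.dist_eq, abs_of_nonneg (sub_nonneg.2 hx.1)]
    have : d ≤ t' + η/2 := min_le_left _ _
    linarith [hx.2]
  -- the finite-difference coupling estimate
  have hC2 : ∀ s : ℝ, 0 < s → M s < ε → M s < ρ/2 →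
      δ * (d - t') * (Real.exp (L*t') * (σ j * (φ t' (z + s • v) j - φ t' z j)))
        ≤ Real.exp (L*d) * (σ i * (φ d (z + s • v) i - φ d z i)) := by
    intro s hs hsε hsρ
    set y := z + s • v with hy
    have hyW' : y ∈ W := hzW' s hs hsε
    set u : Fin n → ℝ → ℝ := fun k t => σ k * (φ t y k - φ t z k) with hudef
    have hucont : ∀ k, ContinuousOn (u k) (Set.Ici 0) := fun k =>
      (((continuous_apply k).comp_continuousOn
        ((hctr y hyW').sub (hctr z hz)))).const_smul (σ k)
    have hud : ∀ k, ∀ x ∈ Set.Ici (0:ℝ), HasDerivWithinAt (u k)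
        (σ k * (F (φ x y) k - F (φ x z) k)) (Set.Ici x) x := by
      intro k x hx
      have h1 := (ContinuousLinearMap.proj (R := ℝ) (φ := fun _ : Fin n => ℝ)
        k).hasFDerivAt.comp_hasDerivWithinAt x (hode y hyW' x hx)
      have h2 := (ContinuousLinearMap.proj (R := ℝ) (φ := fun _ : Fin n => ℝ)
        k).hasFDerivAt.comp_hasDerivWithinAt x (hode z hz x hx)
      exact (((h1.sub h2).const_mul (σ k)).mono (Set.Ici_subset_Ici.2 hx))
    have hunn : ∀ k, ∀ x ∈ Set.Ici (0:ℝ), 0 ≤ u k x := by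
      intro k x hx
      have := hmono x hx z hz y hyW' (hzle s hs) k
      simp only [hudef]; nlinarith
    have hkam : ∀ x ∈ Set.Icc t' d,
        -L * (u i x) + δ * (u j x) ≤ σ i * (F (φ x y) i - F (φ x z) i) := by
      intro x hx
      have hx0 : (0:ℝ) ≤ x := le_trans ht'.1.le hx.1
      have hxT : x ∈ Set.Icc 0 T := ⟨hx0, le_trans hx.2 hd2.le⟩
      have hamem : φ x z ∈ Metric.ball (φ t' z) ρ := by
        rw [Metric.mem_ball]
        exact lt_of_lt_of_le (hdflow x hx) (by linarith [hρpos])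
      have hbmem : φ x y ∈ Metric.ball (φ t' z) ρ := by
        rw [Metric.mem_ball]
        calc dist (φ x y) (φ t' z) ≤ dist (φ x y) (φ x z) + dist (φ x z) (φ t' z) :=
              dist_triangle _ _ _
        _ < M s + ρ/2 := by
              refine add_lt_add_of_le_of_lt ?_ (hdflow x hx)
              rw [dist_eq_norm]
              exact hB s hs hsε x hxT
        _ ≤ ρ := by linarith [hsρ]
      have hflowle : ∀ k, σ k * φ x z k ≤ σ k * φ x y k :=
        hmono x hx0 z hz y hyW' (hzle s hs)
      set ψc : Fin n → ℝ := fun k => if k = i then -L else if k = j then δ else 0 with hψc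
      have hψch : ∀ w ∈ Metric.ball (φ t' z) ρ, ∀ k,
          ψc k ≤ σ i * σ k * (J w (Pi.single k 1)) i := by
        intro w hw k
        by_cases hk : k = i
        · subst hk
          simp only [hψc, if_pos rfl]
          have e1 : ‖(Pi.single k (1:ℝ) : Fin n → ℝ)‖ = 1 := by
            rw [Pi.norm_single, norm_one]
          have e2 := (J w).le_opNorm (Pi.single k 1)
          rw [e1, mul_one] at e2
          have e3 : |(J w (Pi.single k 1)) k| ≤ ‖J w (Pi.single k 1)‖ := by
            rw [← Real.norm_eq_abs]; exact norm_le_pi_norm _ k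
          have h4 := abs_le.1 (le_trans e3 (le_trans e2 (hρJ w hw)))
          calc -L ≤ (J w (Pi.single k 1)) k := by linarith [h4.1]
          _ = σ k * σ k * (J w (Pi.single k 1)) k := by rw [hσsq k]; ring
        · by_cases hkj : k = j
          · subst hkj
            simp only [hψc, if_neg hk, if_pos rfl]
            exact hρδ w hw
          · simp only [hψc, if_neg hk, if_neg hkj]
            exact hcoop w (hρW hw) i k (fun h => hk h.symm)
      have hKam := hKamke (φ t' z) ρ hρW i ψc hψch (φ x z) (φ x y) hamem hbmem hflowle
      have hsum : (∑ k, ψc k * (σ k * (φ x y k - φ x z k))) =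
          -L * (u i x) + δ * (u j x) := by
        have hsplit : ∀ k, ψc k * (σ k * (φ x y k - φ x z k)) =
            (if k = i then -L * (σ k * (φ x y k - φ x z k)) else 0) +
            (if k = j then δ * (σ k * (φ x y k - φ x z k)) else 0) := by
          intro k
          by_cases hk : k = i
          · subst hk
            simp [hψc, if_pos rfl, if_neg hij]
          · by_cases hkj : k = j
            · subst hkj
              simp [hψc, if_neg hk]
            · simp [hψc, if_neg hk, if_neg hkj]
        rw [Finset.sum_congr rfl (fun k _ => hsplit k), Finset.sum_add_distrib,
          Finset.sum_ite_eq' Finset.univ i, Finset.sum_ite_eq' Finset.univ j]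
        simp [hudef]
      rw [hsum] at hKam
      linarith [hKam]
    -- monotonicity of the corrected function
    set cC : ℝ := δ * (Real.exp (L*t') * u j t') with hcC
    have hcCnn : 0 ≤ cC := by
      refine mul_nonneg hδpos.le (mul_nonneg (Real.exp_pos _).le ?_)
      exact hunn j t' ht'.1.le
    set G : ℝ → ℝ := fun t => Real.exp (L*t) * u i t - cC * (t - t') with hGdef
    have hkey : G t' ≤ G d := by
      refine mono_right_aux (g' := fun x => (Real.exp (L*x) * L * u i x +
          Real.exp (L*x) * (σ i * (F (φ x y) i - F (φ x z) i))) - cC) hd1.le ?_ ?_ ?_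
      · refine ContinuousOn.sub (ContinuousOn.mul ?_ ((hucont i).mono ?_)) ?_
        · exact (Real.continuous_exp.comp (continuous_const.mul continuous_id)).continuousOn
        · exact fun x hx => le_trans ht'.1.le hx.1
        · exact (continuous_const.mul (continuous_id.sub continuous_const)).continuousOn
      · intro x hx
        have hx0 : x ∈ Set.Ici (0:ℝ) := le_trans ht'.1.le hx.1
        have hexp : HasDerivAt (fun t => Real.exp (L*t)) (Real.exp (L*x) * L) x := by
          simpa using (((hasDerivAt_id x).const_mul L).exp)
        refine HasDerivWithinAt.sub (hexp.hasDerivWithinAt.mul (hud i x hx0)) ?_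
        have : HasDerivAt (fun t : ℝ => cC * (t - t')) cC x := by
          simpa using ((hasDerivAt_id x).sub_const t').const_mul cC
        exact this.hasDerivWithinAt
      · intro x hx
        have hxIcc : x ∈ Set.Icc t' d := ⟨hx.1, hx.2.le⟩
        have hx0 : x ∈ Set.Ici (0:ℝ) := le_trans ht'.1.le hx.1
        have hxT : x ∈ Set.Icc 0 T := ⟨hx0, le_trans hx.2.le hd2.le⟩
        have h6 := hkam x hxIcc
        have h7 : Real.exp (L*t') * u j t' ≤ Real.exp (L*x) * u j x :=
          hC1 s hs hsε j t' ht'Icc x hxT hx.1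
        have hexpos := Real.exp_pos (L*x)
        show 0 ≤ (Real.exp (L*x) * L * u i x +
          Real.exp (L*x) * (σ i * (F (φ x y) i - F (φ x z) i))) - cC
        have h8 : Real.exp (L*x) * (-L * (u i x) + δ * (u j x)) ≤
            Real.exp (L*x) * (σ i * (F (φ x y) i - F (φ x z) i)) :=
          mul_le_mul_of_nonneg_left h6 hexpos.le
        have h9 : cC ≤ δ * (Real.exp (L*x) * u j x) :=
          mul_le_mul_of_nonneg_left h7 hδpos.le
        nlinarith [h8, h9]
    -- unfold the conclusion
    have hG1 : G t' = Real.exp (L*t') * u i t' := by simp [hGdef]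
    have hG2 : G d = Real.exp (L*d) * u i d - cC * (d - t') := by simp [hGdef]
    have huit' : 0 ≤ u i t' := hunn i t' ht'.1.le
    have hexpos := Real.exp_pos (L*t')
    rw [hG1, hG2] at hkey
    show δ * (d - t') * (Real.exp (L*t') * (u j t')) ≤ Real.exp (L*d) * (u i d)
    nlinarith [mul_nonneg hexpos.le huit', hkey]
  -- pass to the limit
  have hjpos : 0 < σ j * (Dφ t' z v) j := by
    by_contra h
    push_neg at h
    exact hjS ((hZmem t' j).2 h)
  have hineq : δ * (d - t') * (Real.exp (L*t') * (σ j * (Dφ t' z v) j))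
      ≤ Real.exp (L*d) * (σ i * (Dφ d z v) i) := by
    refine le_of_tendsto_of_tendsto
      (((hslope t' ht'Icc j).const_mul (Real.exp (L*t'))).const_mul (δ * (d - t')))
      ((hslope d hdIcc i).const_mul (Real.exp (L*d))) ?_
    filter_upwards [hMev ε hε, hMev (ρ/2) (half_pos hρpos), self_mem_nhdsWithin]
      with s hsε hsρ (hs : (0:ℝ) < s)
    have h6 := hC2 s hs hsε hsρ
    have e1 : δ * (d - t') * (Real.exp (L*t') * (σ j * ((φ t' (z + s • v) j - φ t' z j) / s)))
        = (δ * (d - t') * (Real.exp (L*t') * (σ j * (φ t' (z + s • v) j - φ t' z j)))) / s := by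
      ring
    have e2 : Real.exp (L*d) * (σ i * ((φ d (z + s • v) i - φ d z i) / s))
        = (Real.exp (L*d) * (σ i * (φ d (z + s • v) i - φ d z i))) / s := by
      ring
    show δ * (d - t') * (Real.exp (L*t') * (σ j * ((φ t' (z + s • v) j - φ t' z j) / s)))
        ≤ Real.exp (L*d) * (σ i * ((φ d (z + s • v) i - φ d z i) / s))
    rw [e1, e2]
    exact div_le_div_of_nonneg_right h6 hs.le
  have hid : i ∈ Zs d := by
    rw [hconst d hdIoo hd1.le]
    exact hiS
  have hile : σ i * (Dφ d z v) i ≤ 0 := (hZmem d i).1 hid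
  nlinarith [Real.exp_pos (L*d), Real.exp_pos (L*t'),
    mul_pos (mul_pos hδpos (sub_pos.2 hd1)) (mul_pos (Real.exp_pos (L*t')) hjpos),
    mul_nonpos_of_nonneg_of_nonpos (Real.exp_pos (L*d)).le hile]
end

section
/- (Proposition 2.) Let σ ∈ {−1,1}ⁿ with orthant cone C_σ, let W ⊆ ℝⁿ be open and p-convex with respect to ≤_σ, and let φ : [0,∞) × W → W be a flow (φ(0,z) = z, φ(t+s,z) = φ(t,φ(s,z)), z ↦ φ(t,z) continuously differentiable) with positive derivatives on W: for every t > 0, z ∈ W, and nonzero v ∈ C_σ, D_z φ(t,z) v lies in the interior of C_σ. Then the flow is strongly monotone on W: for all z₁, z₂ ∈ W with z₁ ≤_σ z₂ and z₁ ≠ z₂, and all t > 0, σ_i φ(t,z₁)_i < σ_i φ(t,z₂)_i for every coordinate i. -/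
/-- Proposition 2: if `W` is open and p-convex with respect to the orthant order
`≤_σ` and the flow `φ` has positive derivatives on `W` (for `t > 0`, `z ∈ W` and
nonzero `v ∈ C_σ`, `D_z φ(t,z) v` lies in the interior of `C_σ`), then the flow is
strongly monotone on `W`. -/
theorem positive_derivatives_implies_strongly_monotone
    (n : ℕ) (σ : Fin n → ℝ) (hσ : ∀ i, σ i = 1 ∨ σ i = -1)
    (W : Set (Fin n → ℝ)) (hWopen : IsOpen W)
    (hpconv : ∀ u ∈ W, ∀ v ∈ W, (∀ i, σ i * u i ≤ σ i * v i) →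
        ∀ t ∈ Set.Icc (0 : ℝ) 1, (1 - t) • u + t • v ∈ W)
    (φ : ℝ → (Fin n → ℝ) → Fin n → ℝ)
    (hinv : ∀ t ∈ Set.Ici (0 : ℝ), ∀ z ∈ W, φ t z ∈ W)
    (hφ0 : ∀ z ∈ W, φ 0 z = z)
    (hsemi : ∀ t ∈ Set.Ici (0 : ℝ), ∀ s ∈ Set.Ici (0 : ℝ), ∀ z ∈ W,
        φ (t + s) z = φ t (φ s z))
    (Dφ : ℝ → (Fin n → ℝ) → (Fin n → ℝ) →L[ℝ] (Fin n → ℝ))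
    (hDφ : ∀ t ∈ Set.Ici (0 : ℝ), ∀ z ∈ W, HasFDerivAt (φ t) (Dφ t z) z)
    (hDφcont : ∀ t ∈ Set.Ici (0 : ℝ), ContinuousOn (Dφ t) W)
    (hposder : ∀ t > (0 : ℝ), ∀ z ∈ W, ∀ v : Fin n → ℝ, v ≠ 0 →
        (∀ i, 0 ≤ σ i * v i) → ∀ i, 0 < σ i * (Dφ t z v) i) :
    ∀ z₁ ∈ W, ∀ z₂ ∈ W, (∀ i, σ i * z₁ i ≤ σ i * z₂ i) → z₁ ≠ z₂ →
      ∀ t > (0 : ℝ), ∀ i, σ i * φ t z₁ i < σ i * φ t z₂ i := by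
  intro z₁ hz₁ z₂ hz₂ hle hne t ht i
  set v : Fin n → ℝ := z₂ - z₁ with hv
  have hvne : v ≠ 0 := sub_ne_zero.mpr (Ne.symm hne)
  have hvσ : ∀ j, 0 ≤ σ j * v j := by
    intro j
    have := hle j
    simp only [hv, Pi.sub_apply]
    nlinarith
  set path : ℝ → (Fin n → ℝ) := fun s => (1 - s) • z₁ + s • z₂ with hpath
  have hmem : ∀ s ∈ Set.Icc (0:ℝ) 1, path s ∈ W := fun s hs =>
    hpconv z₁ hz₁ z₂ hz₂ hle s hs
  have hpathderiv : ∀ s : ℝ, HasDerivAt path v s := by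
    intro s
    have h1 : HasDerivAt (fun s : ℝ => (1 - s) • z₁) ((-1 : ℝ) • z₁) s :=
      ((hasDerivAt_id s).const_sub 1).smul_const z₁
    have h2 : HasDerivAt (fun s : ℝ => s • z₂) ((1 : ℝ) • z₂) s :=
      (hasDerivAt_id s).smul_const z₂
    have := h1.add h2
    have e : (-1 : ℝ) • z₁ + (1 : ℝ) • z₂ = v := by rw [hv]; module
    rw [e] at this
    exact this
  set g : ℝ → (Fin n → ℝ) := fun s => φ t (path s) with hg
  have hgderiv : ∀ s ∈ Set.Icc (0:ℝ) 1, HasDerivAt g (Dφ t (path s) v) s := by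
    intro s hs
    exact (hDφ t (le_of_lt ht) (path s) (hmem s hs)).comp_hasDerivAt s (hpathderiv s)
  set h : ℝ → ℝ := fun s => σ i * g s i with hh
  have hhderiv : ∀ s ∈ Set.Icc (0:ℝ) 1,
      HasDerivAt h (σ i * (Dφ t (path s) v) i) s := by
    intro s hs
    have := (hasDerivAt_pi.mp (hgderiv s hs)) i
    exact this.const_mul (σ i)
  have hmono : StrictMonoOn h (Set.Icc (0:ℝ) 1) := by
    apply strictMonoOn_of_deriv_pos (convex_Icc 0 1)
    · intro s hs
      exact (hhderiv s hs).continuousAt.continuousWithinAt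
    · intro s hs
      rw [interior_Icc] at hs
      rw [(hhderiv s ⟨le_of_lt hs.1, le_of_lt hs.2⟩).deriv]
      exact hposder t ht (path s) (hmem s ⟨le_of_lt hs.1, le_of_lt hs.2⟩) v hvne hvσ i
  have key := hmono (Set.left_mem_Icc.mpr zero_le_one)
    (Set.right_mem_Icc.mpr zero_le_one) zero_lt_one
  have h0 : path 0 = z₁ := by simp [hpath]
  have h1 : path 1 = z₂ := by simp [hpath]
  simpa [hh, hg, h0, h1] using key
end

section
/- (Corollary 1.) Let σ ∈ {−1,1}ⁿ with orthant cone C_σ, let W ⊆ ℝⁿ be open and p-convex with respect to ≤_σ, and let F : W → ℝⁿ be continuously differentiable, generating a flow φ : [0,∞) × W → W (φ(0,z) = z, ∂φ/∂t = F(φ), z ↦ φ(t,z) continuously differentiable). Assume the flow is monotone with respect to ≤_σ and that the Jacobian ∂F/∂x(z) is an irreducible matrix for every z ∈ W. Then the flow is strongly monotone on W: for all z₁, z₂ ∈ W with z₁ ≤_σ z₂ and z₁ ≠ z₂, and all t > 0, σ_i φ(t,z₁)_i < σ_i φ(t,z₂)_i for every i. -/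
open Set Filter

private lemma aux_slope_nonneg {g : ℝ → ℝ} {d a : ℝ}
    (hg : HasDerivWithinAt g d (Set.Ici a) a)
    (h : ∀ᶠ s in nhdsWithin a (Set.Ioi a), g a ≤ g s) : 0 ≤ d := by
  rw [hasDerivWithinAt_iff_tendsto_slope] at hg
  have hset : Set.Ici a \ {a} = Set.Ioi a := by
    ext s
    simp only [Set.mem_diff, Set.mem_Ici, Set.mem_singleton_iff, Set.mem_Ioi]
    constructor
    · rintro ⟨h1, h2⟩; exact lt_of_le_of_ne h1 (Ne.symm h2)
    · intro h1; exact ⟨le_of_lt h1, ne_of_gt h1⟩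
  rw [hset] at hg
  refine ge_of_tendsto hg ?_
  filter_upwards [h, self_mem_nhdsWithin] with s hs hs'
  rw [slope_def_field]
  have : a < s := hs'
  exact div_nonneg (by linarith) (by linarith)

/-- Corollary 1: if `W` is open and p-convex with respect to the orthant order
`≤_σ`, the flow `φ` generated by the `C¹` vector field `F` is monotone with respect
to `≤_σ`, and the Jacobian of `F` is irreducible at every point of `W`, then the
flow is strongly monotone on `W`. -/
theorem monotone_irreducible_implies_strongly_monotone
    (n : ℕ) (σ : Fin n → ℝ) (hσ : ∀ i, σ i = 1 ∨ σ i = -1)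
    (W : Set (Fin n → ℝ)) (hWopen : IsOpen W)
    (hpconv : ∀ u ∈ W, ∀ v ∈ W, (∀ i, σ i * u i ≤ σ i * v i) →
        ∀ t ∈ Set.Icc (0 : ℝ) 1, (1 - t) • u + t • v ∈ W)
    (F : (Fin n → ℝ) → Fin n → ℝ)
    (J : (Fin n → ℝ) → (Fin n → ℝ) →L[ℝ] (Fin n → ℝ))
    (hF : ∀ z ∈ W, HasFDerivAt F (J z) z)
    (hJcont : ContinuousOn J W)
    (φ : ℝ → (Fin n → ℝ) → Fin n → ℝ)
    (hinv : ∀ t ∈ Set.Ici (0 : ℝ), ∀ z ∈ W, φ t z ∈ W)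
    (hφ0 : ∀ z ∈ W, φ 0 z = z)
    (hode : ∀ z ∈ W, ∀ t ∈ Set.Ici (0 : ℝ),
        HasDerivWithinAt (fun τ => φ τ z) (F (φ t z)) (Set.Ici 0) t)
    (Dφ : ℝ → (Fin n → ℝ) → (Fin n → ℝ) →L[ℝ] (Fin n → ℝ))
    (hDφ : ∀ t ∈ Set.Ici (0 : ℝ), ∀ z ∈ W, HasFDerivAt (φ t) (Dφ t z) z)
    (hDφcont : ∀ t ∈ Set.Ici (0 : ℝ), ContinuousOn (Dφ t) W)
    (hmono : ∀ t ∈ Set.Ici (0 : ℝ), ∀ z₁ ∈ W, ∀ z₂ ∈ W,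
        (∀ i, σ i * z₁ i ≤ σ i * z₂ i) → ∀ i, σ i * φ t z₁ i ≤ σ i * φ t z₂ i)
    (hirr : ∀ z ∈ W, ∀ S : Finset (Fin n), S.Nonempty → S ≠ Finset.univ →
        ∃ i ∈ S, ∃ j, j ∉ S ∧ J z (Pi.single j 1) i ≠ 0) :
    ∀ z₁ ∈ W, ∀ z₂ ∈ W, (∀ i, σ i * z₁ i ≤ σ i * z₂ i) → z₁ ≠ z₂ →
      ∀ t > (0 : ℝ), ∀ i, σ i * φ t z₁ i < σ i * φ t z₂ i := by
  classical
  -- basic sign facts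
  have hσ2 : ∀ i, σ i * σ i = 1 := fun i => by rcases hσ i with h | h <;> rw [h] <;> norm_num
  have hσne : ∀ i, σ i ≠ 0 := fun i => by rcases hσ i with h | h <;> rw [h] <;> norm_num
  -- quasimonotonicity of F
  have hQM : ∀ p ∈ W, ∀ q ∈ W, (∀ k, σ k * p k ≤ σ k * q k) → ∀ i, p i = q i →
      σ i * F p i ≤ σ i * F q i := by
    intro p hp q hq hpq i hi
    have h1 := (hasDerivWithinAt_pi.mp (hode p hp 0 Set.self_mem_Ici)) i
    have h2 := (hasDerivWithinAt_pi.mp (hode q hq 0 Set.self_mem_Ici)) i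
    rw [hφ0 p hp] at h1
    rw [hφ0 q hq] at h2
    have hg : HasDerivWithinAt (fun τ => σ i * (φ τ q i - φ τ p i))
        (σ i * (F q i - F p i)) (Set.Ici 0) 0 := (h2.sub h1).const_mul (σ i)
    have hd : 0 ≤ σ i * (F q i - F p i) := by
      refine aux_slope_nonneg hg ?_
      filter_upwards [self_mem_nhdsWithin] with s hs
      have hs0 : (0:ℝ) ≤ s := le_of_lt hs
      have h0 : φ 0 q i - φ 0 p i = 0 := by rw [hφ0 p hp, hφ0 q hq, hi]; ring
      rw [h0, mul_zero]
      nlinarith [hmono s hs0 p hp q hq hpq i]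
    nlinarith [hd]
  -- sign structure of the Jacobian
  have hsign : ∀ z ∈ W, ∀ i j, i ≠ j → 0 ≤ σ i * σ j * J z (Pi.single j 1) i := by
    intro z hz i j hij
    set w : Fin n → ℝ := σ j • (Pi.single j 1 : Fin n → ℝ) with hw
    have hc : HasDerivAt (fun h : ℝ => z + h • w) w 0 := by
      simpa using ((hasDerivAt_id (0:ℝ)).smul_const w).const_add z
    have hz0 : z + (0:ℝ) • w = z := by simp
    have hcomp : HasDerivAt (fun h : ℝ => F (z + h • w)) (J z w) 0 :=
      HasFDerivAt.comp_hasDerivAt 0 (by rw [hz0]; exact hF z hz) hc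
    have hci : HasDerivAt (fun h : ℝ => σ i * F (z + h • w) i) (σ i * J z w i) 0 :=
      ((hasDerivAt_pi.mp hcomp) i).const_mul (σ i)
    have hWev : ∀ᶠ h : ℝ in nhds 0, z + h • w ∈ W := by
      have hcont : Continuous (fun h : ℝ => z + h • w) :=
        continuous_const.add (continuous_id.smul continuous_const)
      have : Filter.Tendsto (fun h : ℝ => z + h • w) (nhds 0) (nhds z) := by
        have := hcont.tendsto 0
        simpa using this
      exact this.eventually (hWopen.eventually_mem hz)
    have key : 0 ≤ σ i * J z w i := by
      refine aux_slope_nonneg (hci.hasDerivWithinAt (s := Set.Ici 0)) ?_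
      have hWev' : ∀ᶠ h : ℝ in nhdsWithin 0 (Set.Ioi 0), z + h • w ∈ W :=
        hWev.filter_mono nhdsWithin_le_nhds
      filter_upwards [hWev', self_mem_nhdsWithin] with h hhW hh
      have hh0 : (0:ℝ) < h := hh
      have hle2 : ∀ k, σ k * z k ≤ σ k * (z + h • w) k := by
        intro k
        by_cases hkj : k = j
        · subst hkj
          have : (z + h • w) k = z k + h * σ k := by
            simp [hw, Pi.single_apply]
          rw [this]
          nlinarith [hσ2 k]
        · have : (z + h • w) k = z k := by
            simp [hw, Pi.single_apply, hkj]
          rw [this]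
      have heq : z i = (z + h • w) i := by
        simp [hw, Pi.single_apply, hij]
      have := hQM z hz (z + h • w) hhW hle2 i heq
      simpa using this
    have hJw : J z w i = σ j * J z (Pi.single j 1) i := by
      simp [hw]
    rw [hJw] at key
    nlinarith [key]
  -- decomposition of a linear map along the standard basis
  have hdecomp : ∀ (A : (Fin n → ℝ) →L[ℝ] (Fin n → ℝ)) (δ : Fin n → ℝ) (k : Fin n),
      A δ k = ∑ m, δ m * A (Pi.single m 1) k := by
    intro A δ k
    have hδ : δ = ∑ m, δ m • (Pi.single m 1 : Fin n → ℝ) := by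
      ext j
      rw [Finset.sum_apply]
      simp [Pi.single_apply]
    conv_lhs => rw [hδ]
    rw [map_sum, Finset.sum_apply]
    refine Finset.sum_congr rfl fun m _ => ?_
    rw [map_smul]
    simp
  have hdecomp2 : ∀ (A : (Fin n → ℝ) →L[ℝ] (Fin n → ℝ)) (δ : Fin n → ℝ) (k : Fin n),
      σ k * A δ k = ∑ m, (σ k * σ m * A (Pi.single m 1) k) * (σ m * δ m) := by
    intro A δ k
    rw [hdecomp A δ k, Finset.mul_sum]
    refine Finset.sum_congr rfl fun m _ => ?_
    linear_combination (-(σ k * A (Pi.single m 1) k * δ m)) * hσ2 m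
  -- continuity of evaluation
  have hevcont : ∀ (w : Fin n → ℝ) (k : Fin n),
      Continuous (fun A : (Fin n → ℝ) →L[ℝ] (Fin n → ℝ) => A w k) := by
    intro w k
    exact (continuous_apply k).comp ((ContinuousLinearMap.apply ℝ (Fin n → ℝ) w).continuous)
  -- operator norm bound on diagonal entries
  have hdiag : ∀ (A : (Fin n → ℝ) →L[ℝ] (Fin n → ℝ)) (k : Fin n),
      |A (Pi.single k 1) k| ≤ ‖A‖ := by
    intro A k
    have h1 : |A (Pi.single k 1) k| ≤ ‖A (Pi.single k 1)‖ := by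
      rw [← Real.norm_eq_abs]; exact norm_le_pi_norm _ k
    have h2 : ‖A (Pi.single k 1)‖ ≤ ‖A‖ * ‖(Pi.single k 1 : Fin n → ℝ)‖ := A.le_opNorm _
    rw [Pi.norm_single, norm_one, mul_one] at h2
    linarith
  -- integral representation of increments of F along order segments
  have hrep : ∀ p ∈ W, ∀ q ∈ W, (∀ k, σ k * p k ≤ σ k * q k) → ∀ i,
      F q i - F p i = ∫ α in (0:ℝ)..1, J (p + α • (q - p)) (q - p) i := by
    intro p hp q hq hpq i
    have hγW : ∀ α ∈ Set.Icc (0:ℝ) 1, p + α • (q - p) ∈ W := by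
      intro α hα
      have h1 := hpconv p hp q hq hpq α hα
      have heq : (1 - α) • p + α • q = p + α • (q - p) := by module
      rwa [heq] at h1
    have hγd : ∀ α : ℝ, HasDerivAt (fun β : ℝ => p + β • (q - p)) (q - p) α := by
      intro α
      simpa using ((hasDerivAt_id α).smul_const (q - p)).const_add p
    have hd : ∀ α ∈ Set.uIcc (0:ℝ) 1, HasDerivAt (fun β : ℝ => F (p + β • (q - p)) i)
        (J (p + α • (q - p)) (q - p) i) α := by
      intro α hα
      rw [Set.uIcc_of_le zero_le_one] at hα
      have hmem := hγW α hα
      have hcomp : HasDerivAt (fun β : ℝ => F (p + β • (q - p)))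
          (J (p + α • (q - p)) (q - p)) α :=
        HasFDerivAt.comp_hasDerivAt α (hF _ hmem) (hγd α)
      exact (hasDerivAt_pi.mp hcomp) i
    have hγcont : Continuous (fun α : ℝ => p + α • (q - p)) :=
      continuous_const.add (continuous_id.smul continuous_const)
    have hcont : ContinuousOn (fun α : ℝ => J (p + α • (q - p)) (q - p) i)
        (Set.uIcc (0:ℝ) 1) := by
      rw [Set.uIcc_of_le zero_le_one]
      exact (hevcont (q - p) i).comp_continuousOn
        (hJcont.comp hγcont.continuousOn (fun α hα => hγW α hα))
    have hFTC := intervalIntegral.integral_eq_sub_of_hasDerivAt hd hcont.intervalIntegrable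
    have h1 : p + (1:ℝ) • (q - p) = q := by module
    have h0 : p + (0:ℝ) • (q - p) = p := by module
    rw [h1, h0] at hFTC
    rw [← hFTC]
  -- main argument
  intro z₁ hz₁ z₂ hz₂ hle hne t ht
  set x : Fin n → ℝ → ℝ := fun k s => σ k * (φ s z₂ k - φ s z₁ k) with hxdef
  set γ : ℝ → ℝ → Fin n → ℝ := fun s α => φ s z₁ + α • (φ s z₂ - φ s z₁) with hγdef
  set g : ℝ → Fin n → ℝ → ℝ := fun s k α => σ k * (J (γ s α) (φ s z₂ - φ s z₁) k) with hgdef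
  have huW : ∀ s ∈ Set.Ici (0:ℝ), φ s z₁ ∈ W := fun s hs => hinv s hs z₁ hz₁
  have hvW : ∀ s ∈ Set.Ici (0:ℝ), φ s z₂ ∈ W := fun s hs => hinv s hs z₂ hz₂
  have hord : ∀ s ∈ Set.Ici (0:ℝ), ∀ k, σ k * φ s z₁ k ≤ σ k * φ s z₂ k :=
    fun s hs => hmono s hs z₁ hz₁ z₂ hz₂ hle
  have hxnn : ∀ s ∈ Set.Ici (0:ℝ), ∀ k, 0 ≤ x k s := by
    intro s hs k
    have := hord s hs k
    simp only [hxdef]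
    nlinarith [hord s hs k]
  have hxd : ∀ s ∈ Set.Ici (0:ℝ), ∀ k, HasDerivWithinAt (x k)
      (σ k * (F (φ s z₂) k - F (φ s z₁) k)) (Set.Ici 0) s := by
    intro s hs k
    have h1 := (hasDerivWithinAt_pi.mp (hode z₁ hz₁ s hs)) k
    have h2 := (hasDerivWithinAt_pi.mp (hode z₂ hz₂ s hs)) k
    exact (h2.sub h1).const_mul (σ k)
  have hxcont : ∀ k, ContinuousOn (x k) (Set.Ici 0) :=
    fun k s hs => (hxd s hs k).continuousWithinAt
  have hγW2 : ∀ s ∈ Set.Ici (0:ℝ), ∀ α ∈ Set.Icc (0:ℝ) 1, γ s α ∈ W := by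
    intro s hs α hα
    have h1 := hpconv _ (huW s hs) _ (hvW s hs) (hord s hs) α hα
    have heq : (1 - α) • φ s z₁ + α • φ s z₂ = γ s α := by
      simp only [hγdef]; module
    rwa [heq] at h1
  have hγcont : ∀ s : ℝ, Continuous (fun α => γ s α) := by
    intro s
    simp only [hγdef]
    exact continuous_const.add (continuous_id.smul continuous_const)
  have hgcont : ∀ s ∈ Set.Ici (0:ℝ), ∀ k, ContinuousOn (g s k) (Set.Icc 0 1) := by
    intro s hs k
    simp only [hgdef]
    exact continuousOn_const.mul ((hevcont (φ s z₂ - φ s z₁) k).comp_continuousOn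
      (hJcont.comp (hγcont s).continuousOn (fun α hα => hγW2 s hs α hα)))
  have hgint : ∀ s ∈ Set.Ici (0:ℝ), ∀ k,
      IntervalIntegrable (g s k) MeasureTheory.volume 0 1 := by
    intro s hs k
    apply ContinuousOn.intervalIntegrable
    rw [Set.uIcc_of_le zero_le_one]
    exact hgcont s hs k
  have hkey : ∀ s ∈ Set.Ici (0:ℝ), ∀ k,
      σ k * (F (φ s z₂) k - F (φ s z₁) k) = ∫ α in (0:ℝ)..1, g s k α := by
    intro s hs k
    have h1 := hrep (φ s z₁) (huW s hs) (φ s z₂) (hvW s hs) (hord s hs) k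
    rw [h1, ← intervalIntegral.integral_const_mul]
  have hgexp : ∀ (s : ℝ) (k : Fin n) (α : ℝ),
      g s k α = ∑ m, (σ k * σ m * J (γ s α) (Pi.single m 1) k) * x m s := by
    intro s k α
    simp only [hgdef]
    rw [hdecomp2]
    refine Finset.sum_congr rfl fun m _ => ?_
    simp [hxdef]
  have hterm_nn : ∀ s ∈ Set.Ici (0:ℝ), ∀ α ∈ Set.Icc (0:ℝ) 1, ∀ k m, k ≠ m →
      0 ≤ (σ k * σ m * J (γ s α) (Pi.single m 1) k) * x m s := by
    intro s hs α hα k m hkm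
    exact mul_nonneg (hsign (γ s α) (hγW2 s hs α hα) k m hkm) (hxnn s hs m)
  -- positivity propagates forward in time
  have hprop : ∀ k, ∀ s₁ s₂ : ℝ, 0 ≤ s₁ → s₁ ≤ s₂ → 0 < x k s₁ → 0 < x k s₂ := by
    intro k s₁ s₂ hs₁ h12 hpos
    rcases eq_or_lt_of_le h12 with rfl | hlt
    · exact hpos
    have hucont : ContinuousOn (fun s : ℝ => φ s z₁) (Set.Ici 0) :=
      fun s hs => (hode z₁ hz₁ s hs).continuousWithinAt
    have hvcont : ContinuousOn (fun s : ℝ => φ s z₂) (Set.Ici 0) :=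
      fun s hs => (hode z₂ hz₂ s hs).continuousWithinAt
    have hmaps : ∀ pr : ℝ × ℝ, pr ∈ Set.Icc s₁ s₂ ×ˢ Set.Icc (0:ℝ) 1 → pr.1 ∈ Set.Ici (0:ℝ) :=
      fun pr hpr => le_trans hs₁ hpr.1.1
    have hΓcont : ContinuousOn (fun pr : ℝ × ℝ => γ pr.1 pr.2)
        (Set.Icc s₁ s₂ ×ˢ Set.Icc (0:ℝ) 1) := by
      simp only [hγdef]
      have h1 : ContinuousOn (fun pr : ℝ × ℝ => φ pr.1 z₁)
          (Set.Icc s₁ s₂ ×ˢ Set.Icc (0:ℝ) 1) :=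
        hucont.comp continuousOn_fst hmaps
      have h2 : ContinuousOn (fun pr : ℝ × ℝ => φ pr.1 z₂)
          (Set.Icc s₁ s₂ ×ˢ Set.Icc (0:ℝ) 1) :=
        hvcont.comp continuousOn_fst hmaps
      exact h1.add (continuousOn_snd.smul (h2.sub h1))
    have hKc : IsCompact ((fun pr : ℝ × ℝ => γ pr.1 pr.2) ''
        (Set.Icc s₁ s₂ ×ˢ Set.Icc (0:ℝ) 1)) :=
      (isCompact_Icc.prod isCompact_Icc).image_of_continuousOn hΓcont
    have hKW : ((fun pr : ℝ × ℝ => γ pr.1 pr.2) ''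
        (Set.Icc s₁ s₂ ×ˢ Set.Icc (0:ℝ) 1)) ⊆ W := by
      rintro _ ⟨pr, hpr, rfl⟩
      exact hγW2 pr.1 (hmaps pr hpr) pr.2 hpr.2
    obtain ⟨M, hM⟩ := hKc.exists_bound_of_continuousOn (hJcont.mono hKW)
    -- lower bound for the derivative of x k
    have hlb : ∀ s ∈ Set.Icc s₁ s₂,
        -(M * x k s) ≤ σ k * (F (φ s z₂) k - F (φ s z₁) k) := by
      intro s hsmem
      have hs0 : s ∈ Set.Ici (0:ℝ) := le_trans hs₁ hsmem.1
      rw [hkey s hs0 k]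
      have hci : ∫ α in (0:ℝ)..1, (-(M * x k s)) = -(M * x k s) := by simp
      rw [← hci]
      apply intervalIntegral.integral_mono_on zero_le_one intervalIntegrable_const
        (hgint s hs0 k)
      intro α hα
      rw [hgexp s k α]
      have hsplit := (Finset.add_sum_erase Finset.univ
        (fun m => (σ k * σ m * J (γ s α) (Pi.single m 1) k) * x m s) (Finset.mem_univ k)).symm
      rw [hsplit]
      have hrest : 0 ≤ ∑ m ∈ Finset.univ.erase k,
          (σ k * σ m * J (γ s α) (Pi.single m 1) k) * x m s := by
        refine Finset.sum_nonneg fun m hm => ?_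
        exact hterm_nn s hs0 α hα k m (Ne.symm (Finset.mem_erase.mp hm).1)
      have hmemK : γ s α ∈ (fun pr : ℝ × ℝ => γ pr.1 pr.2) ''
          (Set.Icc s₁ s₂ ×ˢ Set.Icc (0:ℝ) 1) := ⟨(s, α), ⟨hsmem, hα⟩, rfl⟩
      have hMb := hM _ hmemK
      have habs := hdiag (J (γ s α)) k
      have hxk := hxnn s hs0 k
      have hd1 : -(M * x k s) ≤ (σ k * σ k * J (γ s α) (Pi.single k 1) k) * x k s := by
        rw [hσ2 k, one_mul]
        have h1 : -M ≤ J (γ s α) (Pi.single k 1) k := by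
          have := abs_le.mp (le_trans habs hMb)
          linarith [this.1]
        nlinarith
      linarith
    -- Gronwall: exp (M s) * x k s is monotone on [s₁, s₂]
    have hGd : ∀ s ∈ Set.Ioo s₁ s₂, HasDerivAt (fun s => Real.exp (M * s) * x k s)
        (Real.exp (M * s) * M * x k s
          + Real.exp (M * s) * (σ k * (F (φ s z₂) k - F (φ s z₁) k))) s := by
      intro s hs
      have hs0 : (0:ℝ) ≤ s := le_trans hs₁ (le_of_lt hs.1)
      have hspos : (0:ℝ) < s := lt_of_le_of_lt hs₁ hs.1
      have hx' : HasDerivAt (x k) (σ k * (F (φ s z₂) k - F (φ s z₁) k)) s :=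
        (hxd s hs0 k).hasDerivAt (Ici_mem_nhds hspos)
      have he : HasDerivAt (fun s : ℝ => Real.exp (M * s)) (Real.exp (M * s) * M) s := by
        simpa using ((hasDerivAt_id s).const_mul M).exp
      exact (he.mul hx').congr_deriv (by ring)
    have hGmono : MonotoneOn (fun s => Real.exp (M * s) * x k s) (Set.Icc s₁ s₂) := by
      apply monotoneOn_of_deriv_nonneg (convex_Icc s₁ s₂)
      · exact ((Real.continuous_exp.comp (continuous_const.mul continuous_id)).continuousOn).mul
          ((hxcont k).mono (fun s hs => le_trans hs₁ hs.1))
      · rw [interior_Icc]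
        exact fun s hs => (hGd s hs).differentiableAt.differentiableWithinAt
      · intro s hs
        rw [interior_Icc] at hs
        rw [(hGd s hs).deriv]
        have hb := hlb s (Set.Ioo_subset_Icc_self hs)
        have hx0 := hxnn s (le_trans hs₁ (le_of_lt hs.1)) k
        have h2 : 0 ≤ M * x k s + σ k * (F (φ s z₂) k - F (φ s z₁) k) := by linarith
        nlinarith [Real.exp_pos (M * s), h2]
    have hfin := hGmono (Set.left_mem_Icc.mpr h12) (Set.right_mem_Icc.mpr h12) h12
    have hfin' : Real.exp (M * s₁) * x k s₁ ≤ Real.exp (M * s₂) * x k s₂ := hfin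
    by_contra hcon
    push_neg at hcon
    have h1 : 0 < Real.exp (M * s₁) * x k s₁ := mul_pos (Real.exp_pos _) hpos
    have h2 : Real.exp (M * s₂) * x k s₂ ≤ 0 :=
      mul_nonpos_iff.mpr (Or.inl ⟨le_of_lt (Real.exp_pos _), hcon⟩)
    linarith
  -- the endgame
  have ht0 : t ∈ Set.Ici (0:ℝ) := le_of_lt ht
  obtain ⟨k₀, hk₀⟩ := Function.ne_iff.mp hne
  have hx00 : 0 < x k₀ 0 := by
    have h0 : x k₀ 0 = σ k₀ * (z₂ k₀ - z₁ k₀) := by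
      simp only [hxdef, hφ0 z₁ hz₁, hφ0 z₂ hz₂]
    have hnn := hxnn 0 Set.self_mem_Ici k₀
    refine lt_of_le_of_ne hnn (Ne.symm ?_)
    rw [h0]
    intro hc
    rcases mul_eq_zero.mp hc with h | h
    · exact hσne k₀ h
    · exact hk₀ (by linarith)
  have hk₀t : 0 < x k₀ t := hprop k₀ 0 t le_rfl (le_of_lt ht) hx00
  set Z : Finset (Fin n) := Finset.univ.filter (fun k => x k t = 0) with hZ
  have hk₀Z : k₀ ∉ Z := by
    simp only [hZ, Finset.mem_filter, Finset.mem_univ, true_and]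
    exact ne_of_gt hk₀t
  intro i
  suffices hxit : 0 < x i t by
    have : x i t = σ i * φ t z₂ i - σ i * φ t z₁ i := by simp only [hxdef]; ring
    linarith [this ▸ hxit]
  refine lt_of_le_of_ne (hxnn t ht0 i) (fun heq => ?_)
  have hiZ : i ∈ Z := by
    simp only [hZ, Finset.mem_filter, Finset.mem_univ, true_and]
    exact heq.symm
  have hZne : Z.Nonempty := ⟨i, hiZ⟩
  have hZnu : Z ≠ Finset.univ := fun hc => hk₀Z (hc ▸ Finset.mem_univ k₀)
  -- coordinates in Z vanish on all of [0, t]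
  have hZzero : ∀ k ∈ Z, ∀ s ∈ Set.Icc (0:ℝ) t, x k s = 0 := by
    intro k hk s hsmem
    by_contra hne2
    have hposks : 0 < x k s := lt_of_le_of_ne (hxnn s hsmem.1 k) (Ne.symm hne2)
    have := hprop k s t hsmem.1 hsmem.2 hposks
    have hkt : x k t = 0 := by
      have := (Finset.mem_filter.mp hk).2
      exact this
    linarith
  -- coordinates outside Z are positive near t
  have hposZc : ∀ᶠ s in nhds t, ∀ k ∈ Finset.univ \ Z, 0 < x k s := by
    rw [Filter.eventually_all_finset]
    intro k hk
    have hknZ : k ∉ Z := (Finset.mem_sdiff.mp hk).2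
    have hkt : 0 < x k t := by
      refine lt_of_le_of_ne (hxnn t ht0 k) (Ne.symm ?_)
      intro hc
      exact hknZ (by simp only [hZ, Finset.mem_filter, Finset.mem_univ, true_and]; exact hc)
    have hcont : ContinuousAt (x k) t := ((hxcont k) t ht0).continuousAt (Ici_mem_nhds ht)
    exact hcont.eventually (eventually_gt_nhds hkt)
  have hnb : (nhdsWithin t (Set.Ioo 0 t)).NeBot := by
    apply mem_closure_iff_nhdsWithin_neBot.mp
    rw [closure_Ioo ht.ne]
    exact ⟨le_of_lt ht, le_refl t⟩
  obtain ⟨s, hsprop, hsmem⟩ :=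
    ((hposZc.filter_mono (nhdsWithin_le_nhds (s := Set.Ioo 0 t))).and self_mem_nhdsWithin).exists
  have hs0 : s ∈ Set.Ici (0:ℝ) := le_of_lt hsmem.1
  -- for k ∈ Z the integral of g s k vanishes
  have hintzero : ∀ k ∈ Z, ∫ α in (0:ℝ)..1, g s k α = 0 := by
    intro k hk
    have h1 : HasDerivWithinAt (x k) (σ k * (F (φ s z₂) k - F (φ s z₁) k))
        (Set.Icc 0 t) s := (hxd s hs0 k).mono Set.Icc_subset_Ici_self
    have h2 : HasDerivWithinAt (x k) 0 (Set.Icc 0 t) s := by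
      refine (hasDerivWithinAt_const s (Set.Icc 0 t) (0:ℝ)).congr ?_ ?_
      · exact fun y hy => (hZzero k hk y hy)
      · exact hZzero k hk s (Set.Ioo_subset_Icc_self hsmem)
    have hud := (uniqueDiffOn_Icc ht) s (Set.Ioo_subset_Icc_self hsmem)
    have h3 : σ k * (F (φ s z₂) k - F (φ s z₁) k) = 0 :=
      hud.eq_deriv (Set.Icc 0 t) h1 h2
    rw [← hkey s hs0 k]
    exact h3
  -- the integrand is a.e. zero
  have haezero : ∀ k ∈ Z, ∀ᵐ α ∂(MeasureTheory.volume.restrict (Set.Ioc (0:ℝ) 1)),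
      g s k α = 0 := by
    intro k hk
    have hnnae : 0 ≤ᵐ[MeasureTheory.volume.restrict (Set.Ioc (0:ℝ) 1)] g s k := by
      refine (MeasureTheory.ae_restrict_mem measurableSet_Ioc).mono (fun α hα => ?_)
      have hαI : α ∈ Set.Icc (0:ℝ) 1 := Set.Ioc_subset_Icc_self hα
      show (0:ℝ) ≤ g s k α
      rw [hgexp s k α]
      refine Finset.sum_nonneg fun m _ => ?_
      by_cases hmZ : m ∈ Z
      · rw [hZzero m hmZ s (Set.Ioo_subset_Icc_self hsmem)]
        simp
      · refine hterm_nn s hs0 α hαI k m ?_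
        intro hc
        exact hmZ (hc ▸ hk)
    exact (intervalIntegral.integral_eq_zero_iff_of_le_of_nonneg_ae zero_le_one hnnae
      (hgint s hs0 k)).mp (hintzero k hk)
  have hnb2 : (MeasureTheory.ae (MeasureTheory.volume.restrict (Set.Ioc (0:ℝ) 1))).NeBot := by
    rw [MeasureTheory.ae_neBot, Ne, MeasureTheory.Measure.restrict_eq_zero]
    simp [Real.volume_Ioc]
  obtain ⟨α, hαIoc, hαzero⟩ := ((MeasureTheory.ae_restrict_mem measurableSet_Ioc).and
    ((Filter.eventually_all_finset Z).mpr haezero)).exists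
  have hαI : α ∈ Set.Icc (0:ℝ) 1 := Set.Ioc_subset_Icc_self hαIoc
  have hzW : γ s α ∈ W := hγW2 s hs0 α hαI
  obtain ⟨k, hkZ, m, hmZ, hJne⟩ := hirr (γ s α) hzW Z hZne hZnu
  have h0 : ∑ m', (σ k * σ m' * J (γ s α) (Pi.single m' 1) k) * x m' s = 0 := by
    rw [← hgexp s k α]
    exact hαzero k hkZ
  have hterms : ∀ m' ∈ Finset.univ,
      0 ≤ (σ k * σ m' * J (γ s α) (Pi.single m' 1) k) * x m' s := by
    intro m' _
    by_cases hm' : m' ∈ Z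
    · rw [hZzero m' hm' s (Set.Ioo_subset_Icc_self hsmem)]
      simp
    · refine hterm_nn s hs0 α hαI k m' ?_
      intro hc
      exact hm' (hc ▸ hkZ)
  have hzero_each := (Finset.sum_eq_zero_iff_of_nonneg hterms).mp h0
  have hzm := hzero_each m (Finset.mem_univ m)
  have hxm : 0 < x m s := hsprop m (Finset.mem_sdiff.mpr ⟨Finset.mem_univ m, hmZ⟩)
  apply hJne
  rcases mul_eq_zero.mp hzm with h | h
  · rcases mul_eq_zero.mp h with h' | h'
    · rcases mul_eq_zero.mp h' with h'' | h''
      · exact absurd h'' (hσne k)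
      · exact absurd h'' (hσne m)
    · exact h'
  · exact absurd h (ne_of_gt hxm)
end
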